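/- arXiv:1511.04113 — 5 statements merged into one kernel-verified Lean document; each statement's English description precedes it below -/
import Mathlib

section
/- For any h with 1 ≤ h ≤ n−2, the h-embedded connectivity of the hypercube is exactly ζ_h(Q_n) = 2^h (n−h). -/
open SimpleGraph

def cubeGraph (n : ℕ) : SimpleGraph (Fin n → Bool) where
  Adj x y := ∃! i, x i ≠ y i
  symm := by
    constructor
    rintro x y ⟨i, hi, hu⟩
    exact ⟨i, hi.symm, fun j hj => hu j hj.symm⟩
  loopless := by constructor; rintro x ⟨i, hi, -⟩; exact hi rfl

def starGraph (n : ℕ) [NeZero n] : SimpleGraph (Equiv.Perm (Fin n)) where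
  Adj x y := ∃ i : Fin n, i ≠ 0 ∧ y = x * Equiv.swap 0 i
  symm := by
    constructor
    rintro x y ⟨i, hi, rfl⟩
    exact ⟨i, hi, by rw [mul_assoc, Equiv.swap_mul_self, mul_one]⟩
  loopless := by
    constructor
    rintro x ⟨i, hi, h⟩
    exact hi (Equiv.swap_eq_one_iff.mp (left_eq_mul.mp h)).symm

def bubbleGraph (n : ℕ) : SimpleGraph (Equiv.Perm (Fin n)) where
  Adj x y := ∃ (i : Fin n) (hi : (i : ℕ) + 1 < n), y = x * Equiv.swap i ⟨(i : ℕ) + 1, hi⟩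
  symm := by
    constructor
    rintro x y ⟨i, hi, rfl⟩
    exact ⟨i, hi, by rw [mul_assoc, Equiv.swap_mul_self, mul_one]⟩
  loopless := by
    constructor
    rintro x ⟨i, hi, h⟩
    have h1 := Equiv.swap_eq_one_iff.mp (left_eq_mul.mp h)
    have := congrArg Fin.val h1
    simp at this

def IsEmbVertexCut {V W : Type*} (G : SimpleGraph V) (H : SimpleGraph W) (S : Set V) : Prop :=
  ¬ (G.induce Sᶜ).Connected ∧
    ∀ v ∉ S, ∃ A : Set V, v ∈ A ∧ Disjoint A S ∧ Nonempty (H ≃g G.induce A)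

noncomputable def embConn {V W : Type*} (G : SimpleGraph V) (H : SimpleGraph W) : ℕ :=
  sInf {k | ∃ S : Set V, S.Finite ∧ S.ncard = k ∧ IsEmbVertexCut G H S}

def IsEmbEdgeCut {V W : Type*} (G : SimpleGraph V) (H : SimpleGraph W) (F : Set (Sym2 V)) : Prop :=
  F ⊆ G.edgeSet ∧ ¬ (G.deleteEdges F).Connected ∧
    ∀ v : V, ∃ A : Set V, v ∈ A ∧ Nonempty (H ≃g (G.deleteEdges F).induce A)

noncomputable def embEdgeConn {V W : Type*} (G : SimpleGraph V) (H : SimpleGraph W) : ℕ :=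
  sInf {k | ∃ F : Set (Sym2 V), F.Finite ∧ F.ncard = k ∧ IsEmbEdgeCut G H F}

def IsSuperVertexCut {V : Type*} (G : SimpleGraph V) (h : ℕ) (S : Set V) : Prop :=
  ¬ (G.induce Sᶜ).Connected ∧ ∀ v ∉ S, h ≤ ((G.neighborSet v) \ S).ncard

noncomputable def superConn {V : Type*} (G : SimpleGraph V) (h : ℕ) : ℕ :=
  sInf {k | ∃ S : Set V, S.Finite ∧ S.ncard = k ∧ IsSuperVertexCut G h S}

def IsSuperEdgeCut {V : Type*} (G : SimpleGraph V) (h : ℕ) (F : Set (Sym2 V)) : Prop :=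
  F ⊆ G.edgeSet ∧ ¬ (G.deleteEdges F).Connected ∧
    ∀ v : V, h ≤ ((G.deleteEdges F).neighborSet v).ncard

noncomputable def superEdgeConn {V : Type*} (G : SimpleGraph V) (h : ℕ) : ℕ :=
  sInf {k | ∃ F : Set (Sym2 V), F.Finite ∧ F.ncard = k ∧ IsSuperEdgeCut G h F}


open scoped Classical

abbrev BV := ℕ → Bool

def bflip (x : BV) (t : ℕ) : BV := Function.update x t (!x t)

def badj (x y : BV) : Prop := ∃ i, x i ≠ y i ∧ ∀ j, x j ≠ y j → j = i

def bcube (K : Finset ℕ) (w : BV) : Set BV := {x | ∀ i, i ∉ K → x i = w i}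

@[simp] lemma bflip_self (x : BV) (t : ℕ) : bflip x t t = !x t := by
  simp [bflip]

lemma bflip_ne (x : BV) {t j : ℕ} (h : j ≠ t) : bflip x t j = x j := by
  simp [bflip, Function.update_of_ne h]

@[simp] lemma bflip_bflip (x : BV) (t : ℕ) : bflip (bflip x t) t = x := by
  funext j
  by_cases h : j = t
  · subst h; simp
  · rw [bflip_ne _ h, bflip_ne _ h]

lemma bflip_comm (x : BV) {s t : ℕ} (h : s ≠ t) :
    bflip (bflip x s) t = bflip (bflip x t) s := by
  funext j
  by_cases hjt : j = t
  · subst hjt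
    rw [bflip_self, bflip_ne _ (Ne.symm h), bflip_ne _ (Ne.symm h), bflip_self]
  · rw [bflip_ne _ hjt]
    by_cases hjs : j = s
    · subst hjs
      rw [bflip_self, bflip_self, bflip_ne _ hjt]
    · rw [bflip_ne _ hjs, bflip_ne _ hjs, bflip_ne _ hjt]

lemma badj_bflip (x : BV) (t : ℕ) : badj x (bflip x t) := by
  refine ⟨t, ?_, ?_⟩
  · rw [bflip_self]; cases x t <;> simp
  · intro j hj
    by_contra hne
    exact hj (bflip_ne x hne).symm

lemma badj_symm {x y : BV} (h : badj x y) : badj y x := by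
  obtain ⟨i, hi, hu⟩ := h
  exact ⟨i, hi.symm, fun j hj => hu j hj.symm⟩

lemma badj_elim {x y : BV} (h : badj x y) : ∃ t, y = bflip x t ∧ x t ≠ y t := by
  obtain ⟨i, hi, hu⟩ := h
  refine ⟨i, ?_, hi⟩
  funext j
  by_cases hj : j = i
  · subst hj
    rw [bflip_self]
    cases hx : x j <;> cases hy : y j <;> simp_all
  · by_cases hxy : x j = y j
    · rw [bflip_ne _ hj, hxy]
    · exact absurd (hu j hxy) hj

noncomputable def bcubeEquiv (K : Finset ℕ) (w : BV) :
    (bcube K w) ≃ ({i // i ∈ K} → Bool) where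
  toFun x i := x.1 i.1
  invFun g := ⟨fun i => if h : i ∈ K then g ⟨i, h⟩ else w i, fun i hi => dif_neg hi⟩
  left_inv x := by
    ext j
    by_cases hj : j ∈ K
    · simp [dif_pos hj]
    · simp [dif_neg hj, x.2 j hj]
  right_inv g := by
    funext i
    simp [dif_pos i.2]

lemma bcube_finite (K : Finset ℕ) (w : BV) : (bcube K w).Finite := by
  rw [← Set.finite_coe_iff]
  exact Finite.of_equiv _ (bcubeEquiv K w).symm

lemma bcube_ncard (K : Finset ℕ) (w : BV) : (bcube K w).ncard = 2 ^ K.card := by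
  rw [← Nat.card_coe_set_eq, Nat.card_congr (bcubeEquiv K w), Nat.card_eq_fintype_card]
  simp [Fintype.card_fun]

lemma bmindeg : ∀ (h : ℕ) (K : Finset ℕ) (X : Set BV), X.Finite → X.Nonempty →
    (∀ a ∈ X, h ≤ (K.filter fun t => bflip a t ∈ X).card) → 2 ^ h ≤ X.ncard := by
  intro h
  induction h with
  | zero =>
    intro K X hfin hne _
    have h2 := (Set.ncard_pos hfin).mpr hne
    simp only [pow_zero]
    omega
  | succ h ih =>
    intro K X hfin hne hdeg
    obtain ⟨a₀, ha₀⟩ := hne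
    have h1 : 0 < (K.filter fun t => bflip a₀ t ∈ X).card :=
      lt_of_lt_of_le (Nat.succ_pos h) (hdeg a₀ ha₀)
    obtain ⟨t, ht⟩ := Finset.card_pos.mp h1
    rw [Finset.mem_filter] at ht
    obtain ⟨htK, htX⟩ := ht
    have key : ∀ b : Bool, ∀ a ∈ {x ∈ X | x t = b},
        h ≤ ((K.erase t).filter fun s => bflip a s ∈ {x ∈ X | x t = b}).card := by
      intro b a ha
      have hsup : ((K.filter fun s => bflip a s ∈ X).erase t) ⊆
          ((K.erase t).filter fun s => bflip a s ∈ {x ∈ X | x t = b}) := by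
        intro s hs
        rw [Finset.mem_erase, Finset.mem_filter] at hs
        obtain ⟨hst, hsK, hsX⟩ := hs
        rw [Finset.mem_filter, Finset.mem_erase]
        refine ⟨⟨hst, hsK⟩, hsX, ?_⟩
        rw [bflip_ne a (Ne.symm hst)]
        exact ha.2
      calc h = (h + 1) - 1 := rfl
        _ ≤ (K.filter fun s => bflip a s ∈ X).card - 1 :=
            Nat.sub_le_sub_right (hdeg a ha.1) 1
        _ ≤ ((K.filter fun s => bflip a s ∈ X).erase t).card :=
            Finset.pred_card_le_card_erase
        _ ≤ _ := Finset.card_le_card hsup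
    have hne₀ : ({x ∈ X | x t = a₀ t} : Set BV).Nonempty := ⟨a₀, ha₀, rfl⟩
    have hne₁ : ({x ∈ X | x t = !a₀ t} : Set BV).Nonempty :=
      ⟨bflip a₀ t, htX, bflip_self a₀ t⟩
    have hc₀ := ih (K.erase t) _ (hfin.subset (fun x hx => hx.1)) hne₀
      (by intro a ha
          have := key (a₀ t) a ha
          convert this using 3)
    have hc₁ := ih (K.erase t) _ (hfin.subset (fun x hx => hx.1)) hne₁
      (by intro a ha
          have := key (!a₀ t) a ha
          convert this using 3)
    have hunion : X = {x ∈ X | x t = a₀ t} ∪ {x ∈ X | x t = !a₀ t} := by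
      ext x
      constructor
      · intro hx
        rcases Bool.eq_or_eq_not (x t) (a₀ t) with hb | hb
        · exact Or.inl ⟨hx, hb⟩
        · exact Or.inr ⟨hx, hb⟩
      · rintro (hx | hx) <;> exact hx.1
    have hdisj : Disjoint {x ∈ X | x t = a₀ t} {x ∈ X | x t = !a₀ t} := by
      rw [Set.disjoint_left]
      rintro x ⟨_, h1⟩ ⟨_, h2⟩
      rw [h1] at h2
      exact absurd h2 (by simp)
    calc (2:ℕ) ^ (h+1) = 2 ^ h + 2 ^ h := by ring
      _ ≤ _ + _ := Nat.add_le_add hc₀ hc₁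
      _ = X.ncard := by
          rw [← Set.ncard_union_eq hdisj (hfin.subset (fun x hx => hx.1))
            (hfin.subset (fun x hx => hx.1)), ← hunion]

-- ncard of pairwise disjoint biUnion over a Finset
lemma bncard_biUnion (T : Finset ℕ) (f : ℕ → Set BV) (hfin : ∀ t, (f t).Finite)
    (hdisj : ∀ s ∈ T, ∀ t ∈ T, s ≠ t → Disjoint (f s) (f t)) :
    (⋃ t ∈ T, f t).ncard = ∑ t ∈ T, (f t).ncard := by
  induction T using Finset.induction_on with
  | empty => simp
  | @insert a T haT ih =>
    rw [Finset.set_biUnion_insert, Finset.sum_insert haT]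
    have hd : Disjoint (f a) (⋃ t ∈ T, f t) := by
      rw [Set.disjoint_iUnion_right]
      intro t
      rw [Set.disjoint_iUnion_right]
      intro htT
      exact hdisj a (Finset.mem_insert_self a T) t (Finset.mem_insert_of_mem htT)
        (fun h => haT (h ▸ htT))
    rw [Set.ncard_union_eq hd (hfin a) (Set.Finite.biUnion T.finite_toSet (fun t _ => hfin t))]
    rw [ih (fun s hs t ht hst => hdisj s (Finset.mem_insert_of_mem hs) t
      (Finset.mem_insert_of_mem ht) hst)]

lemma barith (h dA dB k a c : ℕ) (h1 : 2^h ≤ a) (h2 : a ≤ 2^dA) (h3 : h ≤ dA)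
    (h4 : 1 ≤ dB) (h5 : dA + dB ≤ k) (h6 : 2^dA ≤ a + 1 + c) :
    2^h*(k-h) ≤ (k-dA)*a + c + 1 := by
  set e := dA - h with he0
  set q := k - dA - 1 with hq0
  have he : dA = h + e := by omega
  have hq : k - dA = q + 1 := by omega
  have h2e : e + 1 ≤ 2^e := (Nat.lt_two_pow_self (n := e))
  have hkh : k - h = q + 1 + e := by omega
  calc 2^h*(k-h) = 2^h*q + 2^h*(e+1) := by rw [hkh]; ring
    _ ≤ a*q + 2^h*2^e :=
        Nat.add_le_add (Nat.mul_le_mul_right q h1) (Nat.mul_le_mul_left _ h2e)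
    _ = a*q + 2^dA := by rw [← pow_add, ← he]
    _ ≤ a*q + (a + 1 + c) := Nat.add_le_add_left h6 _
    _ = (q+1)*a + c + 1 := by ring
    _ = (k-dA)*a + c + 1 := by rw [hq]

lemma bcase2 (K : Finset ℕ) (h : ℕ) (w : BV) (A B : Set BV)
    (hAc : A ⊆ bcube K w) (hBc : B ⊆ bcube K w) (hAne : A.Nonempty) (hBne : B.Nonempty)
    (hdisj : Disjoint A B) (hnoadj : ∀ a ∈ A, ∀ b ∈ B, ¬ badj a b)
    (hdegA : ∀ a ∈ A, h ≤ (K.filter fun t => bflip a t ∈ A).card)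
    (hdegB : ∀ b ∈ B, h ≤ (K.filter fun t => bflip b t ∈ B).card)
    (hnos : ∀ t ∈ K, (∀ a₁ ∈ A, ∀ a₂ ∈ A, a₁ t = a₂ t) ∨ (∀ b₁ ∈ B, ∀ b₂ ∈ B, b₁ t = b₂ t)) :
    2 ^ h * (K.card - h) ≤ ((bcube K w) \ (A ∪ B)).ncard := by
  obtain ⟨a₀, ha₀⟩ := hAne
  obtain ⟨b₀, hb₀⟩ := hBne
  have hSfin : ((bcube K w) \ (A ∪ B)).Finite := (bcube_finite K w).subset Set.diff_subset
  have hAfin : A.Finite := (bcube_finite K w).subset hAc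
  set DA := K.filter (fun t => ∃ a ∈ A, a t ≠ a₀ t) with hDAdef
  set DB := K.filter (fun t => ∃ b ∈ B, b t ≠ b₀ t) with hDBdef
  have hDAK : DA ⊆ K := Finset.filter_subset _ _
  have hDBK : DB ⊆ K := Finset.filter_subset _ _
  have hconstA : ∀ a ∈ A, ∀ i, i ∉ DA → a i = a₀ i := by
    intro a ha i hi
    by_cases hiK : i ∈ K
    · by_contra hne
      exact hi (Finset.mem_filter.mpr ⟨hiK, a, ha, hne⟩)
    · rw [hAc ha i hiK, hAc ha₀ i hiK]
  have hconstB : ∀ b ∈ B, ∀ i, i ∉ DB → b i = b₀ i := by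
    intro b hb i hi
    by_cases hiK : i ∈ K
    · by_contra hne
      exact hi (Finset.mem_filter.mpr ⟨hiK, b, hb, hne⟩)
    · rw [hBc hb i hiK, hBc hb₀ i hiK]
  have hDdisj : Disjoint DA DB := by
    rw [Finset.disjoint_left]
    intro t htA htB
    rw [Finset.mem_filter] at htA htB
    rcases hnos t htA.1 with hca | hcb
    · obtain ⟨a, haA, hne⟩ := htA.2
      exact hne (hca a haA a₀ ha₀)
    · obtain ⟨b, hbB, hne⟩ := htB.2
      exact hne (hcb b hbB b₀ hb₀)
  have hnotself : ∀ (c : Bool), ¬ ((!c) = c) := by decide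
  have hdegDA : h ≤ DA.card := by
    refine le_trans (hdegA a₀ ha₀) (Finset.card_le_card ?_)
    intro t ht
    rw [Finset.mem_filter] at ht ⊢
    refine ⟨ht.1, bflip a₀ t, ht.2, ?_⟩
    rw [bflip_self]
    exact hnotself _
  have hdegDB : h ≤ DB.card := by
    refine le_trans (hdegB b₀ hb₀) (Finset.card_le_card ?_)
    intro t ht
    rw [Finset.mem_filter] at ht ⊢
    refine ⟨ht.1, bflip b₀ t, ht.2, ?_⟩
    rw [bflip_self]
    exact hnotself _
  -- singleton case helper
  have hsingle : ∀ (X Y : Set BV) (x₀ : BV), x₀ ∈ X → (∀ x ∈ X, x = x₀) →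
      X ⊆ bcube K w → (∀ x ∈ X, ∀ y ∈ Y, ¬ badj x y) → X ∪ Y = A ∪ B →
      K.card ≤ ((bcube K w) \ (A ∪ B)).ncard := by
    intro X Y x₀ hx₀ hX1 hXc hXYadj hXY
    have himg : (fun t => bflip x₀ t) '' ↑K ⊆ (bcube K w) \ (A ∪ B) := by
      rintro x ⟨t, htK, rfl⟩
      rw [Finset.mem_coe] at htK
      constructor
      · intro i hi
        show bflip x₀ t i = w i
        have hit : i ≠ t := by intro hh; subst hh; exact hi htK
        rw [bflip_ne _ hit, hXc hx₀ i hi]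
      · rw [← hXY]
        rintro (hx | hx)
        · have hxe := hX1 _ hx
          have h2 := congrFun hxe t
          simp only [bflip_self] at h2
          exact hnotself _ h2
        · exact hXYadj x₀ hx₀ _ hx (badj_bflip x₀ t)
    have hinj : Set.InjOn (fun t => bflip x₀ t) ↑K := by
      intro s hs t ht hst
      by_contra hne
      have h2 := congrFun hst s
      simp only [bflip_self, bflip_ne _ hne] at h2
      exact hnotself _ h2
    calc K.card = (↑K : Set ℕ).ncard := (Set.ncard_coe_finset K).symm
      _ = ((fun t => bflip x₀ t) '' ↑K).ncard := (Set.ncard_image_of_injOn hinj).symm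
      _ ≤ _ := Set.ncard_le_ncard himg hSfin
  by_cases hDA0 : DA = ∅
  · have hA1 : ∀ a ∈ A, a = a₀ := fun a ha =>
      funext fun i => hconstA a ha i (by rw [hDA0]; exact Finset.notMem_empty i)
    have hh0 : h = 0 := by
      have hd := hdegA a₀ ha₀
      have hemp : (K.filter fun t => bflip a₀ t ∈ A) = ∅ := by
        rw [Finset.eq_empty_iff_forall_notMem]
        intro t ht
        rw [Finset.mem_filter] at ht
        have h2 : bflip a₀ t t = a₀ t := by rw [hA1 _ ht.2]
        rw [bflip_self] at h2
        exact hnotself _ h2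
      rw [hemp] at hd
      simpa using hd
    rw [hh0]
    simp only [pow_zero, one_mul, Nat.sub_zero]
    exact hsingle A B a₀ ha₀ hA1 hAc hnoadj rfl
  by_cases hDB0 : DB = ∅
  · have hB1 : ∀ b ∈ B, b = b₀ := fun b hb =>
      funext fun i => hconstB b hb i (by rw [hDB0]; exact Finset.notMem_empty i)
    have hh0 : h = 0 := by
      have hd := hdegB b₀ hb₀
      have hemp : (K.filter fun t => bflip b₀ t ∈ B) = ∅ := by
        rw [Finset.eq_empty_iff_forall_notMem]
        intro t ht
        rw [Finset.mem_filter] at ht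
        have h2 : bflip b₀ t t = b₀ t := by rw [hB1 _ ht.2]
        rw [bflip_self] at h2
        exact hnotself _ h2
      rw [hemp] at hd
      simpa using hd
    rw [hh0]
    simp only [pow_zero, one_mul, Nat.sub_zero]
    exact hsingle B A b₀ hb₀ hB1 hBc (fun x hx y hy hadj => hnoadj y hy x hx (badj_symm hadj))
      (Set.union_comm B A)
  -- main subcase
  have hDAne : DA.Nonempty := Finset.nonempty_of_ne_empty hDA0
  have hDBne : DB.Nonempty := Finset.nonempty_of_ne_empty hDB0
  set TA := K \ DA with hTAdef
  have hTAK : TA ⊆ K := Finset.sdiff_subset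
  have hTA_nDA : ∀ i ∈ TA, i ∉ DA := fun i hi => (Finset.mem_sdiff.mp hi).2
  have hDBTA : DB ⊆ TA := fun t ht =>
    Finset.mem_sdiff.mpr ⟨hDBK ht, Finset.disjoint_right.mp hDdisj ht⟩
  set Sh : ℕ → Set BV := fun t => (fun a => bflip a t) '' A with hShdef
  set core : Set BV := bcube DA a₀ \ (A ∪ bcube DB b₀) with hcoredef
  have hACA : A ⊆ bcube DA a₀ := fun a ha i hi => hconstA a ha i hi
  have hBCB : B ⊆ bcube DB b₀ := fun b hb i hi => hconstB b hb i hi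
  have hShfilter : ∀ t ∈ TA, ∀ x ∈ Sh t, (TA.filter fun i => x i ≠ a₀ i) = {t} := by
    intro t ht x hx
    obtain ⟨a, haA, rfl⟩ := hx
    ext i
    simp only [Finset.mem_filter, Finset.mem_singleton]
    constructor
    · rintro ⟨hiTA, hine⟩
      by_contra hit
      rw [bflip_ne _ hit] at hine
      exact hine (hconstA a haA i (hTA_nDA i hiTA))
    · rintro rfl
      refine ⟨ht, ?_⟩
      rw [bflip_self, hconstA a haA i (hTA_nDA i ht)]
      exact hnotself _
  have hcorefilter : ∀ x ∈ core, (TA.filter fun i => x i ≠ a₀ i) = ∅ := by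
    intro x hx
    rw [Finset.eq_empty_iff_forall_notMem]
    intro i hi
    rw [Finset.mem_filter] at hi
    exact hi.2 (hx.1 i (hTA_nDA i hi.1))
  have hShS : ∀ t ∈ TA, Sh t ⊆ bcube K w \ (A ∪ B) := by
    intro t ht
    rintro x ⟨a, haA, rfl⟩
    have htK := hTAK ht
    refine ⟨?_, ?_⟩
    · intro i hi
      show bflip a t i = w i
      have hit : i ≠ t := by intro hh; subst hh; exact hi htK
      rw [bflip_ne _ hit]
      exact hAc haA i hi
    · rintro (hxA | hxB)
      · have h2 := hconstA _ hxA t (hTA_nDA t ht)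
        simp only [bflip_self] at h2
        rw [hconstA a haA t (hTA_nDA t ht)] at h2
        exact hnotself _ h2
      · exact hnoadj a haA _ hxB (badj_bflip a t)
  have hcoreS : core ⊆ bcube K w \ (A ∪ B) := by
    rintro x ⟨hxCA, hxn⟩
    refine ⟨?_, ?_⟩
    · intro i hi
      rw [hxCA i (fun hh => hi (hDAK hh))]
      exact hAc ha₀ i hi
    · rintro (hxA | hxB)
      · exact hxn (Or.inl hxA)
      · exact hxn (Or.inr (hBCB hxB))
  have hShdisj : ∀ s ∈ TA, ∀ t ∈ TA, s ≠ t → Disjoint (Sh s) (Sh t) := by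
    intro s hs t ht hst
    rw [Set.disjoint_left]
    intro x hxs hxt
    have h1 := hShfilter s hs x hxs
    have h2 := hShfilter t ht x hxt
    rw [h1] at h2
    exact hst (Finset.singleton_inj.mp h2)
  have hcoreSh : ∀ t ∈ TA, Disjoint (Sh t) core := by
    intro t ht
    rw [Set.disjoint_left]
    intro x hxs hxc
    have h1 := hShfilter t ht x hxs
    have h2 := hcorefilter x hxc
    rw [h1] at h2
    exact (Finset.singleton_ne_empty t) h2
  have hShfin : ∀ t, (Sh t).Finite := fun t => hAfin.image _
  have hcorefin : core.Finite := (bcube_finite DA a₀).subset Set.diff_subset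
  have hShcard : ∀ t, (Sh t).ncard = A.ncard := by
    intro t
    apply Set.ncard_image_of_injective
    intro x y hxy
    have h2 := congrArg (fun z => bflip z t) hxy
    simpa only [bflip_bflip] using h2
  have hUcard : (⋃ t ∈ TA, Sh t).ncard = TA.card * A.ncard := by
    rw [bncard_biUnion TA Sh hShfin hShdisj]
    rw [Finset.sum_congr rfl (fun t _ => hShcard t), Finset.sum_const, smul_eq_mul]
  have hbigdisj : Disjoint (⋃ t ∈ TA, Sh t) core := by
    rw [Set.disjoint_left]
    rintro x hx hxc
    rw [Set.mem_iUnion₂] at hx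
    obtain ⟨t, ht, hxt⟩ := hx
    exact Set.disjoint_left.mp (hcoreSh t ht) hxt hxc
  have hUfin : ((⋃ t ∈ TA, Sh t) ∪ core).Finite :=
    (Set.Finite.biUnion TA.finite_toSet (fun t _ => hShfin t)).union hcorefin
  have hUS : (⋃ t ∈ TA, Sh t) ∪ core ⊆ bcube K w \ (A ∪ B) := by
    rintro x (hx | hx)
    · rw [Set.mem_iUnion₂] at hx
      obtain ⟨t, ht, hxt⟩ := hx
      exact hShS t ht hxt
    · exact hcoreS hx
  have hUncard : ((⋃ t ∈ TA, Sh t) ∪ core).ncard = TA.card * A.ncard + core.ncard := by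
    rw [Set.ncard_union_eq hbigdisj
      (Set.Finite.biUnion TA.finite_toSet (fun t _ => hShfin t)) hcorefin, hUcard]
  have hcover : bcube DA a₀ ⊆ A ∪ ((bcube DA a₀ ∩ bcube DB b₀) ∪ core) := by
    intro x hx
    by_cases hxA : x ∈ A
    · exact Or.inl hxA
    by_cases hxCB : x ∈ bcube DB b₀
    · exact Or.inr (Or.inl ⟨hx, hxCB⟩)
    · exact Or.inr (Or.inr ⟨hx, fun hc => hc.elim hxA hxCB⟩)
  have hinter1 : (bcube DA a₀ ∩ bcube DB b₀).ncard ≤ 1 := by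
    have hsub : bcube DA a₀ ∩ bcube DB b₀ ⊆ {fun i => if i ∈ DB then a₀ i else b₀ i} := by
      rintro x ⟨h1, h2⟩
      have hxq : x = fun i => if i ∈ DB then a₀ i else b₀ i := by
        funext i
        by_cases hiDB : i ∈ DB
        · simp only [if_pos hiDB]
          exact h1 i (Finset.disjoint_right.mp hDdisj hiDB)
        · simp only [if_neg hiDB]
          exact h2 i hiDB
      exact hxq
    calc (bcube DA a₀ ∩ bcube DB b₀).ncard
        ≤ ({fun i => if i ∈ DB then a₀ i else b₀ i} : Set BV).ncard :=
          Set.ncard_le_ncard hsub (Set.finite_singleton _)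
      _ = 1 := Set.ncard_singleton _
  have hcore_lb : 2 ^ DA.card ≤ A.ncard + 1 + core.ncard := by
    calc (2:ℕ) ^ DA.card = (bcube DA a₀).ncard := (bcube_ncard DA a₀).symm
      _ ≤ (A ∪ ((bcube DA a₀ ∩ bcube DB b₀) ∪ core)).ncard :=
          Set.ncard_le_ncard hcover (hAfin.union
            (((bcube_finite DA a₀).subset Set.inter_subset_left).union hcorefin))
      _ ≤ A.ncard + ((bcube DA a₀ ∩ bcube DB b₀) ∪ core).ncard := Set.ncard_union_le _ _
      _ ≤ A.ncard + ((bcube DA a₀ ∩ bcube DB b₀).ncard + core.ncard) :=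
          Nat.add_le_add_left (Set.ncard_union_le _ _) _
      _ ≤ A.ncard + (1 + core.ncard) := Nat.add_le_add_left (Nat.add_le_add_right hinter1 _) _
      _ = A.ncard + 1 + core.ncard := by ring
  obtain ⟨t', ht'DA⟩ := hDAne
  have ht'K : t' ∈ K := hDAK ht'DA
  have ht'nDB : t' ∉ DB := Finset.disjoint_left.mp hDdisj ht'DA
  have ht'nTA : t' ∉ TA := fun hh => (hTA_nDA t' hh) ht'DA
  have hnotU : ∀ x, 2 ≤ (TA.filter fun i => x i ≠ a₀ i).card →
      x ∉ (⋃ t ∈ TA, Sh t) ∪ core := by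
    rintro x hc (hx | hx)
    · rw [Set.mem_iUnion₂] at hx
      obtain ⟨t, ht, hxt⟩ := hx
      rw [hShfilter t ht x hxt] at hc
      simp at hc
    · rw [hcorefilter x hx] at hc
      simp at hc
  have hextra : ∃ x, x ∈ bcube K w \ (A ∪ B) ∧ x ∉ (⋃ t ∈ TA, Sh t) ∪ core := by
    by_cases hbig : ∃ b ∈ B, 2 ≤ (TA.filter fun i => b i ≠ a₀ i).card
    · obtain ⟨b, hbB, hb2⟩ := hbig
      refine ⟨bflip b t', ⟨?_, ?_⟩, ?_⟩
      · intro i hi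
        have hit : i ≠ t' := by intro hh; subst hh; exact hi ht'K
        rw [bflip_ne _ hit]
        exact hBc hbB i hi
      · rintro (hxA | hxB)
        · exact hnoadj _ hxA b hbB (badj_symm (badj_bflip b t'))
        · have h2 := hconstB _ hxB t' ht'nDB
          simp only [bflip_self] at h2
          rw [hconstB b hbB t' ht'nDB] at h2
          exact hnotself _ h2
      · apply hnotU
        have hfe : (TA.filter fun i => (bflip b t') i ≠ a₀ i)
            = (TA.filter fun i => b i ≠ a₀ i) := by
          ext i
          simp only [Finset.mem_filter]
          refine and_congr_right fun hiTA => ?_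
          have hit : i ≠ t' := by intro hh; subst hh; exact ht'nTA hiTA
          rw [bflip_ne _ hit]
        rw [hfe]
        exact hb2
    · push_neg at hbig
      have hsmall : ∀ b ∈ B, (TA.filter fun i => b i ≠ a₀ i).card ≤ 1 :=
        fun b hb => Nat.lt_succ_iff.mp (hbig b hb)
      obtain ⟨u, huDB⟩ := hDBne
      have huK : u ∈ K := hDBK huDB
      have huTA : u ∈ TA := hDBTA huDB
      have hex : ∃ b₁ ∈ B, b₁ u ≠ b₀ u := by
        have h2 := huDB
        rw [hDBdef, Finset.mem_filter] at h2
        exact h2.2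
      obtain ⟨b₁, hb₁B, hb₁u⟩ := hex
      obtain ⟨b₂, hb₂B, hb₂u⟩ : ∃ b₂ ∈ B, b₂ u ≠ a₀ u := by
        by_cases hb : b₀ u = a₀ u
        · exact ⟨b₁, hb₁B, fun hh => hb₁u (hh.trans hb.symm)⟩
        · exact ⟨b₀, hb₀, hb⟩
      have hcard1 := hsmall b₂ hb₂B
      have humem : u ∈ TA.filter fun i => b₂ i ≠ a₀ i := Finset.mem_filter.mpr ⟨huTA, hb₂u⟩
      have hb₂eq : ∀ i ∈ TA, i ≠ u → b₂ i = a₀ i := by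
        intro i hi hiu
        by_contra hne
        exact hiu (Finset.card_le_one.mp hcard1 i (Finset.mem_filter.mpr ⟨hi, hne⟩) u humem)
      have hb0a0 : ∀ i ∈ TA, i ∉ DB → b₀ i = a₀ i := by
        intro i hi hiDB
        have hiu : i ≠ u := by intro hh; subst hh; exact hiDB huDB
        rw [← hconstB b₂ hb₂B i hiDB]
        exact hb₂eq i hi hiu
      set p : BV := fun i => if i ∈ DB then a₀ i else b₀ i with hpdef
      have hpCB : p ∈ bcube DB b₀ := fun i hi => by rw [hpdef]; simp only [if_neg hi]
      have hpCA : p ∈ bcube DA a₀ := by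
        intro i hiDA
        rw [hpdef]
        by_cases hiDB : i ∈ DB
        · simp only [if_pos hiDB]
        · simp only [if_neg hiDB]
          by_cases hiK : i ∈ K
          · exact hb0a0 i (Finset.mem_sdiff.mpr ⟨hiK, hiDA⟩) hiDB
          · rw [hBc hb₀ i hiK, hAc ha₀ i hiK]
      have hpa : ∀ i ∈ TA, p i = a₀ i := fun i hi => hpCA i (hTA_nDA i hi)
      have hdiffDB : ∀ b ∈ B, ∀ i, b i ≠ p i → i ∈ DB := by
        intro b hb i hne
        by_contra hiDB
        apply hne
        rw [hconstB b hb i hiDB, hpdef]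
        simp only [if_neg hiDB]
      have hstruct : ∀ b ∈ B, b ≠ p → ∃ u' ∈ DB, b = bflip p u' := by
        intro b hb hbp
        obtain ⟨i₁, hi₁⟩ := Function.ne_iff.mp hbp
        have hi₁DB := hdiffDB b hb i₁ hi₁
        have hmem1 : i₁ ∈ TA.filter fun i => b i ≠ a₀ i := by
          refine Finset.mem_filter.mpr ⟨hDBTA hi₁DB, ?_⟩
          rw [← hpa i₁ (hDBTA hi₁DB)]
          exact hi₁
        refine ⟨i₁, hi₁DB, ?_⟩
        funext j
        by_cases hj : j = i₁
        · subst hj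
          rw [bflip_self]
          exact Bool.eq_not_iff.mpr hi₁
        · rw [bflip_ne _ hj]
          by_contra hne
          have hjDB := hdiffDB b hb j hne
          have hmem2 : j ∈ TA.filter fun i => b i ≠ a₀ i := by
            refine Finset.mem_filter.mpr ⟨hDBTA hjDB, ?_⟩
            rw [← hpa j (hDBTA hjDB)]
            exact hne
          exact hj (Finset.card_le_one.mp (hsmall b hb) j hmem2 i₁ hmem1)
      have hb₂p : b₂ ≠ p := by
        intro hh
        apply hb₂u
        rw [hh, hpdef]
        simp only [if_pos huDB]
      obtain ⟨u', hu'DB, hxe⟩ := hstruct b₂ hb₂B hb₂p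
      have hu'TA : u' ∈ TA := hDBTA hu'DB
      have ht'u' : t' ≠ u' := by intro hh; subst hh; exact ht'nDB hu'DB
      by_cases hpB : p ∈ B
      · refine ⟨bflip b₂ t', ⟨?_, ?_⟩, ?_⟩
        · intro i hi
          have hit : i ≠ t' := by intro hh; subst hh; exact hi ht'K
          rw [bflip_ne _ hit]
          exact hBc hb₂B i hi
        · rintro (hxA | hxB)
          · exact hnoadj _ hxA b₂ hb₂B (badj_symm (badj_bflip b₂ t'))
          · have h2 := hconstB _ hxB t' ht'nDB
            simp only [bflip_self] at h2
            rw [hconstB b₂ hb₂B t' ht'nDB] at h2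
            exact hnotself _ h2
        · have hfw : (TA.filter fun i => (bflip b₂ t') i ≠ a₀ i) = {u'} := by
            ext i
            simp only [Finset.mem_filter, Finset.mem_singleton]
            constructor
            · rintro ⟨hiTA, hine⟩
              have hit : i ≠ t' := by intro hh; subst hh; exact ht'nTA hiTA
              rw [bflip_ne _ hit] at hine
              by_contra hiu
              apply hine
              rw [hxe, bflip_ne _ hiu]
              exact hpa i hiTA
            · rintro rfl
              refine ⟨hu'TA, ?_⟩
              rw [bflip_ne _ (Ne.symm ht'u'), hxe, bflip_self, hpa i hu'TA]
              exact hnotself _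
          rintro (hx | hx)
          · rw [Set.mem_iUnion₂] at hx
            obtain ⟨t, ht, hxt⟩ := hx
            have hft := hShfilter t ht _ hxt
            rw [hfw] at hft
            have htu : u' = t := Finset.singleton_inj.mp hft
            subst htu
            obtain ⟨a, haA, hae⟩ := hxt
            have haeq : a = bflip (bflip b₂ t') u' := by
              have h3 := congrArg (fun z => bflip z u') hae
              simpa only [bflip_bflip] using h3
            have hcalc : bflip (bflip b₂ t') u' = bflip p t' := by
              rw [hxe, bflip_comm (bflip p u') ht'u', bflip_bflip]
            rw [hcalc] at haeq
            exact hnoadj _ (haeq ▸ haA) p hpB (badj_symm (badj_bflip p t'))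
          · have h2 := hcorefilter _ hx
            rw [hfw] at h2
            exact Finset.singleton_ne_empty u' h2
      · refine ⟨p, ⟨?_, ?_⟩, ?_⟩
        · intro i hi
          have hiDA : i ∉ DA := fun hh => hi (hDAK hh)
          rw [hpCA i hiDA]
          exact hAc ha₀ i hi
        · rintro (hxA | hxB)
          · refine hnoadj p hxA b₂ hb₂B ?_
            rw [hxe]
            exact badj_bflip p u'
          · exact hpB hxB
        · rintro (hx | hx)
          · rw [Set.mem_iUnion₂] at hx
            obtain ⟨t, ht, hxt⟩ := hx
            have hf := hShfilter t ht _ hxt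
            have hfp : (TA.filter fun i => p i ≠ a₀ i) = ∅ := by
              rw [Finset.eq_empty_iff_forall_notMem]
              intro i hi
              rw [Finset.mem_filter] at hi
              exact hi.2 (hpa i hi.1)
            rw [hfp] at hf
            exact (Finset.singleton_ne_empty t) hf.symm
          · exact hx.2 (Or.inr hpCB)
  obtain ⟨xx, hxxS, hxxU⟩ := hextra
  have hcount : ((⋃ t ∈ TA, Sh t) ∪ core).ncard + 1 ≤ (bcube K w \ (A ∪ B)).ncard := by
    rw [← Set.ncard_insert_of_notMem hxxU hUfin]
    exact Set.ncard_le_ncard (Set.insert_subset hxxS hUS) hSfin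
  have hTAcard : TA.card = K.card - DA.card := Finset.card_sdiff_of_subset hDAK
  have ha2h : 2 ^ h ≤ A.ncard := bmindeg h K A hAfin ⟨a₀, ha₀⟩ hdegA
  have haCA2 : A.ncard ≤ 2 ^ DA.card := by
    calc A.ncard ≤ (bcube DA a₀).ncard := Set.ncard_le_ncard hACA (bcube_finite DA a₀)
      _ = 2 ^ DA.card := bcube_ncard DA a₀
  have hdBpos : 1 ≤ DB.card := Finset.card_pos.mpr hDBne
  have hdAdB : DA.card + DB.card ≤ K.card := by
    rw [← Finset.card_union_of_disjoint hDdisj]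
    exact Finset.card_le_card (Finset.union_subset hDAK hDBK)
  have hfinal := barith h DA.card DB.card K.card A.ncard core.ncard ha2h haCA2 hdegDA
    hdBpos hdAdB hcore_lb
  calc 2^h * (K.card - h) ≤ (K.card - DA.card) * A.ncard + core.ncard + 1 := hfinal
    _ = ((⋃ t ∈ TA, Sh t) ∪ core).ncard + 1 := by rw [hUncard, hTAcard]
    _ ≤ _ := hcount

theorem bkey : ∀ (k : ℕ) (K : Finset ℕ), K.card = k → ∀ (h : ℕ) (w : BV) (A B : Set BV),
    A ⊆ bcube K w → B ⊆ bcube K w → A.Nonempty → B.Nonempty → Disjoint A B →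
    (∀ a ∈ A, ∀ b ∈ B, ¬ badj a b) →
    (∀ a ∈ A, h ≤ (K.filter fun t => bflip a t ∈ A).card) →
    (∀ b ∈ B, h ≤ (K.filter fun t => bflip b t ∈ B).card) →
    2 ^ h * (k - h) ≤ ((bcube K w) \ (A ∪ B)).ncard := by
  intro k
  induction k using Nat.strong_induction_on with
  | _ k ih =>
  intro K hK h w A B hAc hBc hAne hBne hdisj hnoadj hdegA hdegB
  obtain ⟨a₀, ha₀⟩ := hAne
  obtain ⟨b₀, hb₀⟩ := hBne
  have hSfin : ((bcube K w) \ (A ∪ B)).Finite := (bcube_finite K w).subset Set.diff_subset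
  -- a₀ ≠ b₀ and they differ at a coordinate in K
  have hab : a₀ ≠ b₀ := by
    intro hh
    exact Set.disjoint_left.mp hdisj ha₀ (hh ▸ hb₀)
  obtain ⟨i₀, hi₀⟩ := Function.ne_iff.mp hab
  have hi₀K : i₀ ∈ K := by
    by_contra hiK
    exact hi₀ ((hAc ha₀ i₀ hiK).trans (hBc hb₀ i₀ hiK).symm)
  -- k ≥ 2 dispatch
  have hk2 : 2 ≤ k := by
    by_contra hk
    push_neg at hk
    have hK1 : K = {i₀} := by
      apply Finset.eq_singleton_iff_unique_mem.mpr
      refine ⟨hi₀K, fun j hj => ?_⟩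
      have := Finset.card_le_one.mp (by omega : K.card ≤ 1) j hj i₀ hi₀K
      exact this
    have hadj : badj a₀ b₀ := by
      refine ⟨i₀, hi₀, fun j hj => ?_⟩
      by_contra hji
      have hjK : j ∈ K := by
        by_contra hjK
        exact hj ((hAc ha₀ j hjK).trans (hBc hb₀ j hjK).symm)
      rw [hK1, Finset.mem_singleton] at hjK
      exact hji hjK
    exact hnoadj a₀ ha₀ b₀ hb₀ hadj
  by_cases hsplit : ∃ t ∈ K, (∃ a₁ ∈ A, a₁ t ≠ a₀ t) ∧ (∃ b₁ ∈ B, b₁ t ≠ b₀ t)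
  · -- Case 1 : split along t
    obtain ⟨t, htK, ⟨a₁, ha₁, ha₁t⟩, ⟨b₁, hb₁, hb₁t⟩⟩ := hsplit
    have hhalf : ∀ (X : Set BV), X ⊆ bcube K w → ∀ i : Bool,
        {x ∈ X | x t = i} ⊆ bcube (K.erase t) (Function.update w t i) := by
      intro X hXc i x hx j hj
      rw [Finset.mem_erase] at hj
      push_neg at hj
      by_cases hjt : j = t
      · subst hjt
        rw [hx.2, Function.update_self]
      · rw [Function.update_of_ne hjt]
        exact hXc hx.1 j (hj hjt)
    -- nonemptiness of four parts
    have hpartA : ∀ i : Bool, ({x ∈ A | x t = i} : Set BV).Nonempty := by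
      intro i
      rcases Bool.eq_or_eq_not i (a₀ t) with hi | hi
      · exact ⟨a₀, ha₀, hi.symm⟩
      · refine ⟨a₁, ha₁, ?_⟩
        rw [hi]
        exact (Bool.eq_not_iff.mpr ha₁t).symm ▸ rfl
    have hpartB : ∀ i : Bool, ({x ∈ B | x t = i} : Set BV).Nonempty := by
      intro i
      rcases Bool.eq_or_eq_not i (b₀ t) with hi | hi
      · exact ⟨b₀, hb₀, hi.symm⟩
      · refine ⟨b₁, hb₁, ?_⟩
        rw [hi]
        exact (Bool.eq_not_iff.mpr hb₁t).symm ▸ rfl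
    -- degree transfer
    have hdeghalf : ∀ (X : Set BV), (∀ x ∈ X, h ≤ (K.filter fun s => bflip x s ∈ X).card) →
        ∀ i : Bool, ∀ x ∈ {y ∈ X | y t = i},
          h - 1 ≤ ((K.erase t).filter fun s => bflip x s ∈ {y ∈ X | y t = i}).card := by
      intro X hdegX i x hx
      have hsup : ((K.filter fun s => bflip x s ∈ X).erase t) ⊆
          ((K.erase t).filter fun s => bflip x s ∈ {y ∈ X | y t = i}) := by
        intro s hs
        rw [Finset.mem_erase, Finset.mem_filter] at hs
        obtain ⟨hst, hsK, hsX⟩ := hs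
        rw [Finset.mem_filter, Finset.mem_erase]
        refine ⟨⟨hst, hsK⟩, hsX, ?_⟩
        rw [bflip_ne x (Ne.symm hst)]
        exact hx.2
      calc h - 1 ≤ (K.filter fun s => bflip x s ∈ X).card - 1 :=
            Nat.sub_le_sub_right (hdegX x hx.1) 1
        _ ≤ ((K.filter fun s => bflip x s ∈ X).erase t).card := Finset.pred_card_le_card_erase
        _ ≤ _ := Finset.card_le_card hsup
    have hkerase : (K.erase t).card = k - 1 := by rw [Finset.card_erase_of_mem htK, hK]
    have hIH : ∀ i : Bool, 2 ^ (h-1) * ((k-1) - (h-1)) ≤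
        ((bcube (K.erase t) (Function.update w t i)) \
          ({x ∈ A | x t = i} ∪ {x ∈ B | x t = i})).ncard := by
      intro i
      refine ih (k-1) (by omega) (K.erase t) hkerase (h-1) (Function.update w t i) _ _
        (hhalf A hAc i) (hhalf B hBc i) (hpartA i) (hpartB i) ?_ ?_ ?_ ?_
      · exact Set.disjoint_of_subset (fun x hx => hx.1) (fun x hx => hx.1) hdisj
      · intro a ha b hb
        exact hnoadj a ha.1 b hb.1
      · intro a ha
        have := hdeghalf A hdegA i a ha
        convert this using 3
      · intro b hb
        have := hdeghalf B hdegB i b hb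
        convert this using 3
    -- combine
    have hSi_sub : ∀ i : Bool, ((bcube (K.erase t) (Function.update w t i)) \
          ({x ∈ A | x t = i} ∪ {x ∈ B | x t = i})) ⊆ (bcube K w) \ (A ∪ B) := by
      intro i x hx
      have hxt : x t = i := by
        have := hx.1 t (Finset.notMem_erase t K)
        rw [Function.update_self] at this
        exact this
      constructor
      · intro j hj
        have hjt : j ≠ t := fun hh => hj (hh ▸ htK)
        have := hx.1 j (fun hh => hj (Finset.mem_of_mem_erase hh))
        rw [Function.update_of_ne hjt] at this
        exact this
      · rintro (hxA | hxB)
        · exact hx.2 (Or.inl ⟨hxA, hxt⟩)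
        · exact hx.2 (Or.inr ⟨hxB, hxt⟩)
    have hSi_disj : Disjoint ((bcube (K.erase t) (Function.update w t false)) \
          ({x ∈ A | x t = false} ∪ {x ∈ B | x t = false}))
        ((bcube (K.erase t) (Function.update w t true)) \
          ({x ∈ A | x t = true} ∪ {x ∈ B | x t = true})) := by
      rw [Set.disjoint_left]
      intro x hx0 hx1
      have h0 : x t = false := by
        have := hx0.1 t (Finset.notMem_erase t K)
        rwa [Function.update_self] at this
      have h1 : x t = true := by
        have := hx1.1 t (Finset.notMem_erase t K)
        rwa [Function.update_self] at this
      rw [h0] at h1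
      exact Bool.false_ne_true h1
    have hfin0 : ((bcube (K.erase t) (Function.update w t false)) \
          ({x ∈ A | x t = false} ∪ {x ∈ B | x t = false})).Finite :=
      (bcube_finite _ _).subset Set.diff_subset
    have hfin1 : ((bcube (K.erase t) (Function.update w t true)) \
          ({x ∈ A | x t = true} ∪ {x ∈ B | x t = true})).Finite :=
      (bcube_finite _ _).subset Set.diff_subset
    have hcomb : 2 ^ (h-1) * ((k-1) - (h-1)) + 2 ^ (h-1) * ((k-1) - (h-1)) ≤
        ((bcube K w) \ (A ∪ B)).ncard := by
      calc 2 ^ (h-1) * ((k-1) - (h-1)) + 2 ^ (h-1) * ((k-1) - (h-1))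
          ≤ _ + _ := Nat.add_le_add (hIH false) (hIH true)
        _ = (((bcube (K.erase t) (Function.update w t false)) \
              ({x ∈ A | x t = false} ∪ {x ∈ B | x t = false})) ∪
            ((bcube (K.erase t) (Function.update w t true)) \
              ({x ∈ A | x t = true} ∪ {x ∈ B | x t = true}))).ncard :=
            (Set.ncard_union_eq hSi_disj hfin0 hfin1).symm
        _ ≤ _ := Set.ncard_le_ncard (Set.union_subset (hSi_sub false) (hSi_sub true)) hSfin
    refine le_trans ?_ hcomb
    -- arithmetic : 2^h (k-h) ≤ 2 * 2^(h-1) ((k-1)-(h-1))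
    rcases Nat.eq_zero_or_pos h with hh0 | hhpos
    · subst hh0
      simp only [pow_zero, one_mul, Nat.sub_zero]
      omega
    · have hh1 : h - 1 + 1 = h := by omega
      have he : (k-1) - (h-1) = k - h := by omega
      rw [he]
      rcases le_or_gt h k with hhk | hhk
      · have : (2:ℕ) ^ h = 2 ^ (h-1) * 2 := by
          rw [← pow_succ, hh1]
        rw [this]
        have : 2 ^ (h-1) * 2 * (k - h) = 2 ^ (h-1) * (k-h) + 2 ^ (h-1) * (k-h) := by ring
        rw [this]
      · have : k - h = 0 := by omega
        rw [this]
        simp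
  · -- Case 2
    push_neg at hsplit
    rw [← hK]
    apply bcase2 K h w A B hAc hBc ⟨a₀, ha₀⟩ ⟨b₀, hb₀⟩ hdisj hnoadj hdegA hdegB
    intro t htK
    by_cases hA : ∃ a₁ ∈ A, a₁ t ≠ a₀ t
    · right
      intro x hx y hy
      rw [hsplit t htK hA x hx, hsplit t htK hA y hy]
    · left
      push_neg at hA
      intro x hx y hy
      rw [hA x hx, hA y hy]

-- Fin-level flip
def fflip {n : ℕ} (x : Fin n → Bool) (i : Fin n) : Fin n → Bool :=
  Function.update x i (!x i)

lemma fadj_flip {n : ℕ} (x : Fin n → Bool) (i : Fin n) : (cubeGraph n).Adj x (fflip x i) := by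
  refine ⟨i, ?_, ?_⟩
  · simp only [fflip, Function.update_self]
    cases x i <;> simp
  · intro j hj
    by_contra hne
    rw [fflip, Function.update_of_ne hne] at hj
    exact hj rfl

lemma fadj_elim {n : ℕ} {x y : Fin n → Bool} (h : (cubeGraph n).Adj x y) :
    ∃ i, y = fflip x i := by
  obtain ⟨i, hi, hu⟩ := h
  refine ⟨i, ?_⟩
  funext j
  by_cases hj : j = i
  · subst hj
    rw [fflip, Function.update_self]
    cases hx : x j <;> cases hy : y j <;> simp_all
  · by_cases hxy : x j = y j
    · rw [fflip, Function.update_of_ne hj, hxy]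
    · exact absurd (hu j hxy) hj

lemma fflip_inj_idx {n : ℕ} {x : Fin n → Bool} {i j : Fin n} (h : fflip x i = fflip x j) :
    i = j := by
  by_contra hne
  have h2 := congrFun h i
  rw [fflip, fflip, Function.update_self, Function.update_of_ne hne] at h2
  exact (by cases x i <;> simp_all : False)

-- embedding into BV
def toBV (n : ℕ) (x : Fin n → Bool) : BV := fun i => if hi : i < n then x ⟨i, hi⟩ else false

lemma toBV_inj (n : ℕ) : Function.Injective (toBV n) := by
  intro x y hxy
  funext i
  have := congrFun hxy i.1
  simpa [toBV, i.2] using this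

lemma toBV_mem_cube (n : ℕ) (x : Fin n → Bool) :
    toBV n x ∈ bcube (Finset.range n) (fun _ => false) := by
  intro i hi
  rw [Finset.mem_range] at hi
  simp [toBV, hi]

lemma toBV_surj_cube (n : ℕ) {z : BV} (hz : z ∈ bcube (Finset.range n) (fun _ => false)) :
    ∃ x, toBV n x = z := by
  refine ⟨fun i => z i.1, ?_⟩
  funext j
  by_cases hj : j < n
  · simp [toBV, hj]
  · simp only [toBV, dif_neg hj]
    exact (hz j (by rw [Finset.mem_range]; exact hj)).symm

lemma toBV_flip (n : ℕ) (x : Fin n → Bool) (i : Fin n) :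
    toBV n (fflip x i) = bflip (toBV n x) i.1 := by
  funext j
  by_cases hj : j = i.1
  · subst hj
    rw [bflip_self]
    have hjn : (i:ℕ) < n := i.2
    simp only [toBV, dif_pos hjn]
    have : (⟨i.1, hjn⟩ : Fin n) = i := Fin.ext rfl
    rw [this, fflip, Function.update_self]
  · rw [bflip_ne _ hj]
    by_cases hjn : j < n
    · simp only [toBV, dif_pos hjn]
      rw [fflip, Function.update_of_ne (fun hh => hj (congrArg Fin.val hh))]
    · simp only [toBV, dif_neg hjn]

lemma badj_toBV {n : ℕ} {x y : Fin n → Bool} (h : badj (toBV n x) (toBV n y)) :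
    (cubeGraph n).Adj x y := by
  obtain ⟨t, ht, hu⟩ := h
  have htn : t < n := by
    by_contra htn
    apply ht
    simp [toBV, htn]
  -- all differing coords are t
  have hyx : y = fflip x ⟨t, htn⟩ := by
    apply toBV_inj n
    rw [toBV_flip]
    funext j
    by_cases hj : j = t
    · subst hj
      rw [bflip_self]
      revert ht
      cases toBV n x j <;> cases toBV n y j <;> simp
    · rw [bflip_ne _ hj]
      by_contra hne
      exact hj (hu j (Ne.symm hne))
  rw [hyx]
  exact fadj_flip x ⟨t, htn⟩

lemma cube_deg {n h : ℕ} {S' : Set (Fin n → Bool)} {v : Fin n → Bool}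
    (Av : Set (Fin n → Bool)) (hvA : v ∈ Av) (hdisjA : Disjoint Av S')
    (φ : cubeGraph h ≃g (cubeGraph n).induce Av) :
    h ≤ (Finset.univ.filter fun i : Fin n => fflip v i ∉ S').card := by
  set y₀ := φ.symm ⟨v, hvA⟩ with hy₀
  have hstep : ∀ j : Fin h, (cubeGraph n).Adj v ((φ (fflip y₀ j)) : Fin n → Bool) := by
    intro j
    have hadj1 : (cubeGraph h).Adj y₀ (fflip y₀ j) := fadj_flip y₀ j
    have hadj2 := φ.map_adj_iff.mpr hadj1
    rw [hy₀, RelIso.apply_symm_apply] at hadj2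
    exact hadj2
  choose c hc using fun j => fadj_elim (hstep j)
  have hmem : ∀ j : Fin h, c j ∈ Finset.univ.filter fun i : Fin n => fflip v i ∉ S' := by
    intro j
    rw [Finset.mem_filter]
    refine ⟨Finset.mem_univ _, ?_⟩
    rw [← hc j]
    exact Set.disjoint_left.mp hdisjA (φ (fflip y₀ j)).2
  have hinj : Set.InjOn c ↑(Finset.univ : Finset (Fin h)) := by
    intro j _ j' _ hjj
    have h2 : ((φ (fflip y₀ j)) : Fin n → Bool) = ((φ (fflip y₀ j')) : Fin n → Bool) := by
      rw [hc j, hc j', hjj]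
    have h3 : φ (fflip y₀ j) = φ (fflip y₀ j') := Subtype.ext h2
    have h4 : fflip y₀ j = fflip y₀ j' := φ.toEquiv.injective h3
    exact fflip_inj_idx h4
  calc h = (Finset.univ : Finset (Fin h)).card := by rw [Finset.card_univ, Fintype.card_fin]
    _ ≤ _ := Finset.card_le_card_of_injOn c (fun j _ => hmem j) hinj

lemma emb_lower (n h : ℕ) (h2 : h + 2 ≤ n) (S' : Set (Fin n → Bool))
    (hcut : IsEmbVertexCut (cubeGraph n) (cubeGraph h) S') :
    2 ^ h * (n - h) ≤ S'.ncard := by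
  obtain ⟨hconn, hemb⟩ := hcut
  by_cases hSc : (S'ᶜ : Set (Fin n → Bool)) = ∅
  · have hSu : S' = Set.univ := by
      rw [← Set.compl_empty, ← hSc, compl_compl]
    rw [hSu, Set.ncard_univ, Nat.card_eq_fintype_card]
    calc 2^h*(n-h) ≤ 2^h * 2^(n-h) := Nat.mul_le_mul_left _ (le_of_lt Nat.lt_two_pow_self)
      _ = 2^n := by rw [← pow_add]; congr 1; omega
      _ ≤ Fintype.card (Fin n → Bool) := by
          rw [Fintype.card_fun, Fintype.card_fin, Fintype.card_bool]
  · have hne : (S'ᶜ : Set (Fin n → Bool)).Nonempty := Set.nonempty_iff_ne_empty.mpr hSc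
    obtain ⟨x₀, hx₀⟩ := hne
    have hNE : Nonempty ↥(S'ᶜ) := ⟨⟨x₀, hx₀⟩⟩
    have hpre : ¬ ((cubeGraph n).induce S'ᶜ).Preconnected := by
      intro hp
      exact hconn (by haveI := hNE; exact ⟨hp⟩)
    rw [SimpleGraph.Preconnected] at hpre
    push_neg at hpre
    obtain ⟨x, y, hxy⟩ := hpre
    set A : Set (Fin n → Bool) :=
      {z | ∃ hz : z ∈ S'ᶜ, ((cubeGraph n).induce S'ᶜ).Reachable x ⟨z, hz⟩} with hAdef
    set B : Set (Fin n → Bool) := S'ᶜ \ A with hBdef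
    have hAsub : A ⊆ S'ᶜ := by rintro z ⟨hz, -⟩; exact hz
    have hxA : x.1 ∈ A := ⟨x.2, SimpleGraph.Reachable.refl x⟩
    have hyB : y.1 ∈ B := by
      refine ⟨y.2, fun hyA => ?_⟩
      obtain ⟨hz, hr⟩ := hyA
      have : (⟨y.1, hz⟩ : ↥(S'ᶜ)) = y := Subtype.ext rfl
      rw [this] at hr
      exact hxy hr
    have hstepA : ∀ a ∈ A, ∀ z, (cubeGraph n).Adj a z → z ∈ S'ᶜ → z ∈ A := by
      rintro a ⟨ha1, hr⟩ z hadj hz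
      refine ⟨hz, hr.trans (SimpleGraph.Adj.reachable ?_)⟩
      exact hadj
    have hstepB : ∀ b ∈ B, ∀ z, (cubeGraph n).Adj b z → z ∈ S'ᶜ → z ∈ B := by
      rintro b ⟨hb1, hbA⟩ z hadj hz
      refine ⟨hz, fun hzA => hbA ?_⟩
      obtain ⟨hz2, hr⟩ := hzA
      refine ⟨hb1, hr.trans (SimpleGraph.Adj.reachable ?_)⟩
      exact hadj.symm
    have hdegS : ∀ v ∈ S'ᶜ, h ≤ (Finset.univ.filter fun i : Fin n => fflip v i ∉ S').card := by
      intro v hv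
      obtain ⟨Av, hvA, hdisjA, ⟨φ⟩⟩ := hemb v hv
      exact cube_deg Av hvA hdisjA φ
    have hdegA : ∀ a ∈ A, h ≤ (Finset.univ.filter fun i : Fin n => fflip a i ∈ A).card := by
      intro a ha
      refine le_trans (hdegS a (hAsub ha)) (Finset.card_le_card ?_)
      intro i hi
      rw [Finset.mem_filter] at hi ⊢
      exact ⟨hi.1, hstepA a ha _ (fadj_flip a i) hi.2⟩
    have hdegB : ∀ b ∈ B, h ≤ (Finset.univ.filter fun i : Fin n => fflip b i ∈ B).card := by
      intro b hb
      refine le_trans (hdegS b hb.1) (Finset.card_le_card ?_)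
      intro i hi
      rw [Finset.mem_filter] at hi ⊢
      exact ⟨hi.1, hstepB b hb _ (fadj_flip b i) hi.2⟩
    have hnoedge : ∀ a ∈ A, ∀ b ∈ B, ¬ (cubeGraph n).Adj a b := by
      intro a ha b hb hadj
      exact hb.2 (hstepA a ha b hadj hb.1)
    -- transfer to BV
    have hmemim : ∀ (X : Set (Fin n → Bool)) (z : Fin n → Bool),
        toBV n z ∈ toBV n '' X ↔ z ∈ X := fun X z =>
      Function.Injective.mem_set_image (toBV_inj n)
    have hdegim : ∀ (X : Set (Fin n → Bool)),
        (∀ a ∈ X, h ≤ (Finset.univ.filter fun i : Fin n => fflip a i ∈ X).card) →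
        ∀ a' ∈ toBV n '' X,
          h ≤ ((Finset.range n).filter fun t => bflip a' t ∈ toBV n '' X).card := by
      rintro X hdegX a' ⟨a, haX, rfl⟩
      refine le_trans (hdegX a haX) (Finset.card_le_card_of_injOn Fin.val ?_ ?_)
      · intro i hi
        rw [Finset.mem_coe, Finset.mem_filter] at hi
        rw [Finset.mem_coe, Finset.mem_filter]
        refine ⟨Finset.mem_range.mpr i.2, ?_⟩
        rw [← toBV_flip]
        exact Set.mem_image_of_mem _ hi.2
      · intro i _ j _ hij
        exact Fin.ext hij
    have hkey := bkey n (Finset.range n) (Finset.card_range n) h (fun _ => false)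
      (toBV n '' A) (toBV n '' B)
      (by rintro z ⟨a, _, rfl⟩; exact toBV_mem_cube n a)
      (by rintro z ⟨b, _, rfl⟩; exact toBV_mem_cube n b)
      ⟨toBV n x.1, Set.mem_image_of_mem _ hxA⟩
      ⟨toBV n y.1, Set.mem_image_of_mem _ hyB⟩
      (Set.disjoint_image_of_injective (toBV_inj n) Set.disjoint_sdiff_right)
      (by rintro a' ⟨a, haA, rfl⟩ b' ⟨b, hbB, rfl⟩ hadj
          exact hnoedge a haA b hbB (badj_toBV hadj))
      (hdegim A (by intro a ha; have := hdegA a ha; convert this using 3))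
      (hdegim B (by intro b hb; have := hdegB b hb; convert this using 3))
    have hAB : A ∪ B = S'ᶜ := Set.union_diff_cancel hAsub
    have hSeq : bcube (Finset.range n) (fun _ => false) \ (toBV n '' A ∪ toBV n '' B)
        = toBV n '' S' := by
      ext z
      constructor
      · rintro ⟨hzc, hzn⟩
        obtain ⟨x', rfl⟩ := toBV_surj_cube n hzc
        refine Set.mem_image_of_mem _ ?_
        by_contra hxS
        have hx'c : x' ∈ A ∪ B := by rw [hAB]; exact hxS
        rcases hx'c with hA' | hB'
        · exact hzn (Or.inl (Set.mem_image_of_mem _ hA'))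
        · exact hzn (Or.inr (Set.mem_image_of_mem _ hB'))
      · rintro ⟨x', hx', rfl⟩
        refine ⟨toBV_mem_cube n x', ?_⟩
        rintro (hzA | hzB)
        · exact (hAsub ((hmemim A x').mp hzA)) hx'
        · exact ((hmemim B x').mp hzB).1 hx'
    rw [hSeq, Set.ncard_image_of_injective S' (toBV_inj n)] at hkey
    exact hkey

section upper
variable (n h : ℕ)

def tcard (x : Fin n → Bool) : ℕ :=
  (Finset.univ.filter fun i : Fin n => h ≤ (i:ℕ) ∧ x i = true).card

def cutS : Set (Fin n → Bool) := {x | tcard n h x = 1}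

variable {n h}

lemma tcard_flip_le {x : Fin n → Bool} (i : Fin n) :
    tcard n h (fflip x i) ≤ tcard n h x + 1 := by
  have hsub : (Finset.univ.filter fun j : Fin n => h ≤ (j:ℕ) ∧ (fflip x i) j = true)
      ⊆ insert i (Finset.univ.filter fun j : Fin n => h ≤ (j:ℕ) ∧ x j = true) := by
    intro j hj
    rw [Finset.mem_filter] at hj
    rw [Finset.mem_insert]
    by_cases hji : j = i
    · exact Or.inl hji
    · refine Or.inr (Finset.mem_filter.mpr ⟨Finset.mem_univ _, hj.2.1, ?_⟩)
      rw [← hj.2.2, fflip, Function.update_of_ne hji]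
  calc tcard n h (fflip x i)
      ≤ (insert i (Finset.univ.filter fun j : Fin n => h ≤ (j:ℕ) ∧ x j = true)).card :=
        Finset.card_le_card hsub
    _ ≤ tcard n h x + 1 := Finset.card_insert_le _ _

lemma tcard_adj_le {x y : Fin n → Bool} (hadj : (cubeGraph n).Adj x y) :
    tcard n h y ≤ tcard n h x + 1 := by
  obtain ⟨i, rfl⟩ := fadj_elim hadj
  exact tcard_flip_le i

lemma cut_disconn (h1 : 1 ≤ h) (h2 : h + 2 ≤ n) :
    ¬ ((cubeGraph n).induce (cutS n h)ᶜ).Connected := by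
  have hu0 : tcard n h (fun _ => false) = 0 := by
    rw [tcard, Finset.card_eq_zero, Finset.eq_empty_iff_forall_notMem]
    intro i hi
    rw [Finset.mem_filter] at hi
    exact Bool.false_ne_true hi.2.2
  set v2 : Fin n → Bool := fun i => decide ((i:ℕ) = h ∨ (i:ℕ) = h + 1) with hv2def
  have hv2 : tcard n h v2 = 2 := by
    have hfe : (Finset.univ.filter fun i : Fin n => h ≤ (i:ℕ) ∧ v2 i = true)
        = {⟨h, by omega⟩, ⟨h+1, by omega⟩} := by
      ext i
      rw [Finset.mem_filter, Finset.mem_insert, Finset.mem_singleton]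
      constructor
      · rintro ⟨-, -, hi⟩
        rw [hv2def] at hi
        simp only [decide_eq_true_eq] at hi
        rcases hi with hi | hi
        · exact Or.inl (Fin.ext hi)
        · exact Or.inr (Fin.ext hi)
      · rintro (rfl | rfl)
        · exact ⟨Finset.mem_univ _, le_refl _, by rw [hv2def]; simp⟩
        · exact ⟨Finset.mem_univ _, by simp, by rw [hv2def]; simp⟩
    rw [tcard, hfe]
    rw [Finset.card_insert_of_notMem (by
      rw [Finset.mem_singleton]
      intro hc
      rw [Fin.ext_iff] at hc
      simp at hc), Finset.card_singleton]
  have hwalk : ∀ (a b : ↥(cutS n h)ᶜ), (((cubeGraph n).induce (cutS n h)ᶜ).Walk a b) →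
      tcard n h a.1 = 0 → tcard n h b.1 = 0 := by
    intro a b wk
    induction wk with
    | nil => exact id
    | @cons u c w huc p ih =>
      intro h0
      apply ih
      have hle : tcard n h c.1 ≤ 1 := by
        have hadj : (cubeGraph n).Adj u.1 c.1 := huc
        have := tcard_adj_le (n := n) (h := h) hadj
        omega
      have hne : tcard n h c.1 ≠ 1 := c.2
      omega
  intro hconn
  have hr := hconn.preconnected ⟨fun _ => false, by
      show ¬ tcard n h (fun _ => false) = 1
      omega⟩
    ⟨v2, by
      show ¬ tcard n h v2 = 1
      omega⟩
  obtain ⟨wk⟩ := hr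
  have h4 := hwalk _ _ wk hu0
  have h5 : tcard n h v2 = 0 := h4
  omega

lemma cut_copies (h2 : h + 2 ≤ n) : ∀ v ∉ cutS n h,
    ∃ A : Set (Fin n → Bool), v ∈ A ∧ Disjoint A (cutS n h) ∧
      Nonempty (cubeGraph h ≃g (cubeGraph n).induce A) := by
  intro v hv
  have hhn : h ≤ n := by omega
  set Av : Set (Fin n → Bool) := {x | ∀ i : Fin n, h ≤ (i:ℕ) → x i = v i} with hAvdef
  have hvAv : v ∈ Av := fun i _ => rfl
  have htc : ∀ x ∈ Av, tcard n h x = tcard n h v := by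
    intro x hx
    unfold tcard
    congr 1
    ext i
    simp only [Finset.mem_filter, Finset.mem_univ, true_and]
    constructor
    · rintro ⟨hhi, hxi⟩
      exact ⟨hhi, by rw [← hx i hhi]; exact hxi⟩
    · rintro ⟨hhi, hvi⟩
      exact ⟨hhi, by rw [hx i hhi]; exact hvi⟩
  refine ⟨Av, hvAv, ?_, ?_⟩
  · rw [Set.disjoint_left]
    intro x hxA hxS
    apply hv
    show tcard n h v = 1
    rw [← htc x hxA]
    exact hxS
  · -- iso
    set ef : (Fin h → Bool) → (Fin n → Bool) :=
      fun g i => if hi : (i:ℕ) < h then g ⟨i, hi⟩ else v i with hefdef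
    have hef_mem : ∀ g, ef g ∈ Av := by
      intro g i hhi
      rw [hefdef]
      simp only
      rw [dif_neg (Nat.not_lt.mpr hhi)]
    have hext_lt : ∀ g (j : Fin h), ef g ⟨j.1, lt_of_lt_of_le j.2 hhn⟩ = g j := by
      intro g j
      rw [hefdef]
      simp only
      rw [dif_pos j.2]
    have hext_lt' : ∀ g (i : Fin n) (hih : (i:ℕ) < h), ef g i = g ⟨i.1, hih⟩ := by
      intro g i hih
      rw [hefdef]
      simp only
      rw [dif_pos hih]
    have hext_ge : ∀ g (i : Fin n), ¬ ((i:ℕ) < h) → ef g i = v i := by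
      intro g i hih
      rw [hefdef]
      simp only
      rw [dif_neg hih]
    refine ⟨⟨⟨fun g => ⟨ef g, hef_mem g⟩,
        fun x => fun j : Fin h => x.1 ⟨j.1, lt_of_lt_of_le j.2 hhn⟩, ?_, ?_⟩, ?_⟩⟩
    · intro g
      funext j
      exact hext_lt g j
    · intro x
      apply Subtype.ext
      funext i
      show ef (fun j : Fin h => x.1 ⟨j.1, lt_of_lt_of_le j.2 hhn⟩) i = x.1 i
      by_cases hih : (i:ℕ) < h
      · exact (hext_lt' (fun j : Fin h => x.1 ⟨j.1, lt_of_lt_of_le j.2 hhn⟩) i hih).trans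
          (congrArg x.1 (Fin.ext rfl))
      · exact (hext_ge (fun j : Fin h => x.1 ⟨j.1, lt_of_lt_of_le j.2 hhn⟩) i hih).trans
          (x.2 i (Nat.not_lt.mp hih)).symm
    · intro g g'
      show (cubeGraph n).Adj (ef g) (ef g') ↔ (cubeGraph h).Adj g g'
      constructor
      · rintro ⟨i, hi, hu⟩
        have hih : (i:ℕ) < h := by
          by_contra hih
          apply hi
          rw [hext_ge g i hih, hext_ge g' i hih]
        refine ⟨⟨i.1, hih⟩, ?_, ?_⟩
        · intro he
          apply hi
          rw [hext_lt' g i hih, hext_lt' g' i hih, he]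
        · intro j hj
          have hne : ef g ⟨j.1, lt_of_lt_of_le j.2 hhn⟩ ≠ ef g' ⟨j.1, lt_of_lt_of_le j.2 hhn⟩ := by
            rw [hext_lt g j, hext_lt g' j]
            exact hj
          have := hu _ hne
          apply Fin.ext
          rw [Fin.ext_iff] at this
          exact this
      · rintro ⟨j, hj, hju⟩
        refine ⟨⟨j.1, lt_of_lt_of_le j.2 hhn⟩, ?_, ?_⟩
        · exact fun he => hj (((hext_lt g j).symm.trans he).trans (hext_lt g' j))
        · intro i hi
          have hih : (i:ℕ) < h := by
            by_contra hih
            apply hi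
            rw [hext_ge g i hih, hext_ge g' i hih]
          have h5 : g ⟨i.1, hih⟩ ≠ g' ⟨i.1, hih⟩ := by
            rw [← hext_lt' g i hih, ← hext_lt' g' i hih]
            exact hi
          have := hju _ h5
          apply Fin.ext
          rw [Fin.ext_iff] at this
          exact this

lemma cut_ncard (h2 : h + 2 ≤ n) : (cutS n h).ncard = 2 ^ h * (n - h) := by
  have hhn : h ≤ n := by omega
  set f : ((Fin h → Bool) × {j : Fin n // h ≤ (j:ℕ)}) → (Fin n → Bool) :=
    fun gj => fun i => if hi : (i:ℕ) < h then gj.1 ⟨i, hi⟩ else decide (i = gj.2.1) with hfdef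
  have hfmem : ∀ gj, f gj ∈ cutS n h := by
    rintro ⟨g, j⟩
    show tcard n h (f (g, j)) = 1
    have hfe : (Finset.univ.filter fun i : Fin n => h ≤ (i:ℕ) ∧ (f (g,j)) i = true) = {j.1} := by
      ext i
      rw [Finset.mem_filter, Finset.mem_singleton]
      constructor
      · rintro ⟨-, hhi, hxi⟩
        rw [hfdef] at hxi
        simp only [dif_neg (Nat.not_lt.mpr hhi)] at hxi
        exact of_decide_eq_true hxi
      · rintro rfl
        refine ⟨Finset.mem_univ _, j.2, ?_⟩
        rw [hfdef]
        simp only [dif_neg (Nat.not_lt.mpr j.2)]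
        simp
    rw [tcard, hfe, Finset.card_singleton]
  have hinj : Function.Injective f := by
    rintro ⟨g, j⟩ ⟨g', j'⟩ heq
    have hj : j = j' := by
      have h5 := congrFun heq j.1
      rw [hfdef] at h5
      simp only [dif_neg (Nat.not_lt.mpr j.2)] at h5
      have h7 : decide (j.1 = j'.1) = true := by rw [← h5]; simp
      exact Subtype.ext (of_decide_eq_true h7)
    subst hj
    have hg : g = g' := by
      funext i
      have h5 := congrFun heq ⟨i.1, lt_of_lt_of_le i.2 hhn⟩
      rw [hfdef] at h5
      simp only [dif_pos i.2] at h5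
      have hieta : (⟨(i:ℕ), i.2⟩ : Fin h) = i := Fin.ext rfl
      rwa [hieta] at h5
    rw [hg]
  have hsurj : ∀ x ∈ cutS n h, ∃ gj, f gj = x := by
    intro x hx
    have hx1 : (Finset.univ.filter fun i : Fin n => h ≤ (i:ℕ) ∧ x i = true).card = 1 := hx
    obtain ⟨j₀, hj₀⟩ := Finset.card_eq_one.mp hx1
    have hj₀mem : j₀ ∈ Finset.univ.filter fun i : Fin n => h ≤ (i:ℕ) ∧ x i = true := by
      rw [hj₀]; exact Finset.mem_singleton_self j₀
    rw [Finset.mem_filter] at hj₀mem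
    obtain ⟨-, hj₀h, hj₀x⟩ := hj₀mem
    refine ⟨(fun i : Fin h => x ⟨i.1, lt_of_lt_of_le i.2 hhn⟩, ⟨j₀, hj₀h⟩), ?_⟩
    funext i
    rw [hfdef]
    simp only
    by_cases hih : (i:ℕ) < h
    · rw [dif_pos hih]
    · rw [dif_neg hih]
      by_cases hij : i = j₀
      · subst hij
        simp [hj₀x]
      · have hxi : x i ≠ true := by
          intro hxi
          apply hij
          have : i ∈ Finset.univ.filter fun i : Fin n => h ≤ (i:ℕ) ∧ x i = true :=
            Finset.mem_filter.mpr ⟨Finset.mem_univ _, Nat.not_lt.mp hih, hxi⟩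
          rw [hj₀] at this
          exact Finset.mem_singleton.mp this
        simp only [decide_eq_false hij]
        exact (Bool.eq_false_iff.mpr hxi).symm
  have hbij : Function.Bijective
      (fun gj => (⟨f gj, hfmem gj⟩ : ↥(cutS n h))) := by
    constructor
    · intro a b hab
      exact hinj (congrArg Subtype.val hab)
    · rintro ⟨x, hx⟩
      obtain ⟨gj, hgj⟩ := hsurj x hx
      exact ⟨gj, Subtype.ext hgj⟩
  have e2 : {j : Fin n // h ≤ (j:ℕ)} ≃ Fin (n - h) := by
    refine ⟨fun j => ⟨j.1.1 - h, ?_⟩, fun m => ⟨⟨m.1 + h, ?_⟩, Nat.le_add_left h m.1⟩, ?_, ?_⟩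
    · have := j.1.2
      have := j.2
      omega
    · have := m.2
      omega
    · intro j
      apply Subtype.ext
      apply Fin.ext
      have := j.2
      simp only
      omega
    · intro m
      apply Fin.ext
      simp only
      omega
  have hT : Fintype.card {j : Fin n // h ≤ (j:ℕ)} = n - h := by
    rw [Fintype.card_congr e2, Fintype.card_fin]
  rw [← Nat.card_coe_set_eq, Nat.card_congr (Equiv.ofBijective _ hbij).symm,
    Nat.card_eq_fintype_card, Fintype.card_prod, Fintype.card_fun, Fintype.card_fin,
    Fintype.card_bool, hT]

/-- `ζ_h(Q_n) = 2^h (n-h)` for `1 ≤ h ≤ n-2`. -/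
theorem stmt3 (n h : ℕ) (h1 : 1 ≤ h) (h2 : h + 2 ≤ n) :
    embConn (cubeGraph n) (cubeGraph h) = 2 ^ h * (n - h) := by
  have hmem : 2 ^ h * (n - h) ∈ {k | ∃ S : Set (Fin n → Bool), S.Finite ∧ S.ncard = k ∧
      IsEmbVertexCut (cubeGraph n) (cubeGraph h) S} :=
    ⟨cutS n h, Set.toFinite _, cut_ncard h2, cut_disconn h1 h2, cut_copies h2⟩
  refine le_antisymm (Nat.sInf_le hmem) (le_csInf ⟨_, hmem⟩ ?_)
  rintro k ⟨S', hfin, rfl, hcut⟩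
  exact emb_lower n h h2 S' hcut
end upper
end

section
/- For any h with 1 ≤ h ≤ n−1, the h-embedded edge-connectivity of the hypercube is exactly η_h(Q_n) = 2^h (n−h). -/
open SimpleGraph

section CubeProofAux
open Finset


lemma cube_adj_iff {n : ℕ} (x y : Fin n → Bool) :
    (cubeGraph n).Adj x y ↔ ∃ i, y = Function.update x i (!x i) := by
  constructor
  · rintro ⟨i, hi, hu⟩
    refine ⟨i, funext fun j => ?_⟩
    rcases eq_or_ne j i with rfl | hj
    · rw [Function.update_self]
      revert hi; cases x j <;> cases y j <;> simp
    · rw [Function.update_of_ne hj]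
      by_contra hxy
      exact hj (hu j (Ne.symm hxy))
  · rintro ⟨i, rfl⟩
    refine ⟨i, ?_, fun j hj => ?_⟩
    · simp
    · simp only [ne_eq] at hj
      by_contra hji
      rw [Function.update_of_ne hji] at hj
      exact hj rfl

lemma cube_adj_comm {n : ℕ} (x y : Fin n → Bool) :
    (cubeGraph n).Adj x y ↔ (cubeGraph n).Adj y x := SimpleGraph.adj_comm _ _ _

lemma flip_injective {n : ℕ} (x : Fin n → Bool) :
    Function.Injective (fun i => Function.update x i (!x i)) := by
  intro i j hij
  by_contra hne
  have := congrFun hij i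
  simp only [Function.update_self, Function.update_of_ne (Ne.symm hne)] at this
  cases x i <;> simp_all

open Finset in
lemma cube_degree {n : ℕ} (x : Fin n → Bool) [DecidablePred ((cubeGraph n).Adj x)] :
    (Finset.univ.filter ((cubeGraph n).Adj x)).card = n := by
  have : Finset.univ.filter ((cubeGraph n).Adj x)
      = Finset.univ.image (fun i => Function.update x i (!x i)) := by
    ext y
    simp only [mem_filter, Finset.mem_univ, true_and, Finset.mem_image, cube_adj_iff]
    tauto
  rw [this, Finset.card_image_of_injective _ (flip_injective x), Finset.card_univ,
    Fintype.card_fin]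


lemma bool_ne_iff' {a b : Bool} : a ≠ b ↔ b = !a := by cases a <;> cases b <;> simp

/-- tail of a vector -/
def tl (x : Fin (n+1) → Bool) : Fin n → Bool := x ∘ Fin.succ

lemma cube_adj_succ (x y : Fin (n+1) → Bool) :
    (cubeGraph (n+1)).Adj x y ↔
      (x 0 = y 0 ∧ (cubeGraph n).Adj (tl x) (tl y)) ∨ (x 0 ≠ y 0 ∧ tl x = tl y) := by
  rw [cube_adj_iff]
  constructor
  · rintro ⟨i, rfl⟩
    induction i using Fin.cases with
    | zero =>
      right
      constructor
      · rw [Function.update_self]; cases x 0 <;> simp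
      · funext k
        simp [tl, Function.update_of_ne (Fin.succ_ne_zero k)]
    | succ j =>
      left
      constructor
      · rw [Function.update_of_ne (Fin.succ_ne_zero j).symm]
      · rw [cube_adj_iff]
        refine ⟨j, funext fun k => ?_⟩
        rcases eq_or_ne k j with rfl | hkj
        · simp [tl]
        · simp [tl, Function.update_of_ne hkj,
            Function.update_of_ne (fun hh => hkj (Fin.succ_injective n hh))]
  · rintro (⟨h0, hadj⟩ | ⟨h0, htl⟩)
    · rw [cube_adj_iff] at hadj
      obtain ⟨j, hj⟩ := hadj
      refine ⟨j.succ, funext fun k => ?_⟩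
      induction k using Fin.cases with
      | zero => rw [Function.update_of_ne (Fin.succ_ne_zero j).symm, ← h0]
      | succ m =>
        have := congrFun hj m
        rcases eq_or_ne m j with rfl | hmj
        · simpa [tl] using this
        · rw [Function.update_of_ne hmj] at this
          rw [Function.update_of_ne (fun hh => hmj (Fin.succ_injective n hh))]
          exact this
    · refine ⟨0, funext fun k => ?_⟩
      induction k using Fin.cases with
      | zero => rw [Function.update_self]; exact bool_ne_iff'.mp h0
      | succ m =>
        rw [Function.update_of_ne (Fin.succ_ne_zero m)]
        exact (congrFun htl m).symm

lemma lnineq (x : ℝ) (h0 : 0 ≤ x) (h1 : x ≤ 1) : x * Real.log 2 ≤ Real.log (1 + x) := by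
  have key : Real.exp (x * Real.log 2) ≤ 1 + x := by
    have hc := convexOn_exp.2 (Set.mem_univ (0:ℝ)) (Set.mem_univ (Real.log 2))
      (by linarith : (0:ℝ) ≤ 1 - x) h0 (by ring)
    simp only [smul_eq_mul, mul_zero, zero_add, Real.exp_zero, mul_one,
      Real.exp_log (by norm_num : (0:ℝ) < 2)] at hc
    calc Real.exp (x * Real.log 2) = Real.exp ((1-x) * 0 + x * Real.log 2) := by ring_nf
    _ ≤ (1-x) * 1 + x * 2 := by simpa using hc
    _ = 1 + x := by ring
  calc x * Real.log 2 = Real.log (Real.exp (x * Real.log 2)) := (Real.log_exp _).symm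
  _ ≤ Real.log (1 + x) := Real.log_le_log (Real.exp_pos _) key

lemma mix_aux (a b : ℕ) (hab : a ≤ b) :
    (a:ℝ) * Real.log a + b * Real.log b + 2 * a * Real.log 2
      ≤ ((a:ℝ) + b) * Real.log (a + b) := by
  rcases Nat.eq_zero_or_pos a with rfl | ha
  · simp
  have ha' : (0:ℝ) < a := by exact_mod_cast ha
  have hb' : (0:ℝ) < b := lt_of_lt_of_le ha' (by exact_mod_cast hab)
  have h1 : (a:ℝ) * Real.log a + a * Real.log 2 ≤ a * Real.log (a + b) := by
    have : Real.log (2 * a) ≤ Real.log (a + b) := by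
      apply Real.log_le_log (by positivity)
      have : (a:ℝ) ≤ b := by exact_mod_cast hab
      linarith
    rw [Real.log_mul (by norm_num) (ne_of_gt ha')] at this
    nlinarith [this]
  have h2 : (b:ℝ) * Real.log b + a * Real.log 2 ≤ b * Real.log (a + b) := by
    have hx0 : (0:ℝ) ≤ a / b := by positivity
    have hx1 : (a:ℝ) / b ≤ 1 := by
      rw [div_le_one hb']; exact_mod_cast hab
    have := lnineq _ hx0 hx1
    have heq : (1:ℝ) + a / b = (a + b) / b := by field_simp; ring
    rw [heq, Real.log_div (by positivity) (ne_of_gt hb')] at this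
    have := mul_le_mul_of_nonneg_left this hb'.le
    rw [mul_sub] at this
    have hd : (b:ℝ) * (a / b * Real.log 2) = a * Real.log 2 := by field_simp
    rw [hd] at this
    linarith
  have : ((a:ℝ) + b) * Real.log (a+b) = a * Real.log (a+b) + b * Real.log (a+b) := by ring
  rw [this]
  linarith

lemma mix (a b c : ℕ) (hc : c ≤ min a b) :
    (a:ℝ) * Real.log a + b * Real.log b + 2 * c * Real.log 2
      ≤ ((a:ℝ) + b) * Real.log (a + b) := by
  have hlog2 : (0:ℝ) ≤ Real.log 2 := Real.log_nonneg (by norm_num)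
  have hca : (c:ℝ) ≤ a := by exact_mod_cast le_trans hc (min_le_left a b)
  have hcb : (c:ℝ) ≤ b := by exact_mod_cast le_trans hc (min_le_right a b)
  rcases le_total a b with hab | hab
  · have := mix_aux a b hab
    nlinarith
  · have := mix_aux b a hab
    have hcomm : ((b:ℝ) + a) * Real.log (b + a) = ((a:ℝ)+b) * Real.log (a+b) := by ring_nf
    rw [hcomm] at this
    nlinarith

open scoped Classical in
noncomputable def EO (n : ℕ) (s : Finset (Fin n → Bool)) : ℕ :=
  ((s ×ˢ s).filter (fun p => (cubeGraph n).Adj p.1 p.2)).card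

lemma head_tail_ext {n : ℕ} {x y : Fin (n+1) → Bool} (h0 : x 0 = y 0) (ht : tl x = tl y) :
    x = y :=
  funext fun k => Fin.cases h0 (fun m => congrFun ht m) k

open scoped Classical in
set_option maxHeartbeats 2000000 in
theorem iso_ineq (n : ℕ) (s : Finset (Fin n → Bool)) :
    (EO n s : ℝ) * Real.log 2 ≤ s.card * Real.log s.card := by
  induction n with
  | zero =>
    have hEO : EO 0 s = 0 := by
      rw [EO, Finset.card_eq_zero]
      ext ⟨x, y⟩
      simp only [Finset.mem_filter, Finset.notMem_empty, iff_false, not_and]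
      rintro - ⟨i, -, -⟩
      exact i.elim0
    rw [hEO]
    rcases Nat.eq_zero_or_pos s.card with h | h
    · simp [h]
    · have h1' : (1:ℝ) ≤ s.card := by exact_mod_cast h
      have h2' := Real.log_nonneg h1'
      have h3' : (0:ℝ) ≤ (s.card:ℝ) * Real.log s.card := by positivity
      simpa using h3'
  | succ n ih =>
    set G := cubeGraph (n+1) with hG
    set s0 := s.filter (fun x => x 0 = false) with hs0
    set s1 := s.filter (fun x => x 0 = true) with hs1
    set sf := s0.image tl with hsf
    set st := s1.image tl with hst
    have hinj0 : Set.InjOn tl (s0 : Set (Fin (n+1) → Bool)) := by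
      intro x hx y hy hxy
      simp only [hs0, coe_filter, Set.mem_setOf_eq] at hx hy
      exact head_tail_ext (hx.2.trans hy.2.symm) hxy
    have hinj1 : Set.InjOn tl (s1 : Set (Fin (n+1) → Bool)) := by
      intro x hx y hy hxy
      simp only [hs1, coe_filter, Set.mem_setOf_eq] at hx hy
      exact head_tail_ext (hx.2.trans hy.2.symm) hxy
    have hcf : sf.card = s0.card := Finset.card_image_of_injOn hinj0
    have hct : st.card = s1.card := Finset.card_image_of_injOn hinj1
    have hcard : s.card = s0.card + s1.card := by
      have hre : s.filter (fun a => ¬ a 0 = false) = s1 := by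
        rw [hs1]
        apply Finset.filter_congr
        intro x _
        simp [Bool.not_eq_false]
      rw [hs0, ← hre]
      exact (Finset.card_filter_add_card_filter_not _).symm
    -- the four pieces
    set A00 := (s0 ×ˢ s0).filter (fun p => G.Adj p.1 p.2) with hA00
    set A01 := (s0 ×ˢ s1).filter (fun p => G.Adj p.1 p.2) with hA01
    set A10 := (s1 ×ˢ s0).filter (fun p => G.Adj p.1 p.2) with hA10
    set A11 := (s1 ×ˢ s1).filter (fun p => G.Adj p.1 p.2) with hA11
    have hsplit : EO (n+1) s = A00.card + A01.card + A10.card + A11.card := by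
      have hd1 : Disjoint A00 A01 := by
        rw [Finset.disjoint_left]
        rintro ⟨a, b⟩ h h'
        simp only [hA00, hA01, mem_filter, mem_product, hs0, hs1, mem_filter] at h h'
        rw [h.1.2.2] at h'; exact Bool.false_ne_true h'.1.2.2
      have hd2 : Disjoint A10 A11 := by
        rw [Finset.disjoint_left]
        rintro ⟨a, b⟩ h h'
        simp only [hA10, hA11, mem_filter, mem_product, hs0, hs1, mem_filter] at h h'
        rw [h.1.2.2] at h'; exact Bool.false_ne_true h'.1.2.2
      have hd3 : Disjoint (A00 ∪ A01) (A10 ∪ A11) := by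
        rw [Finset.disjoint_left]
        rintro ⟨a, b⟩ h h'
        simp only [Finset.mem_union, hA00, hA01, hA10, hA11, mem_filter, mem_product,
          hs0, hs1, mem_filter] at h h'
        have h1 : a 0 = false := by rcases h with h | h <;> exact h.1.1.2
        have h2 : a 0 = true := by rcases h' with h' | h' <;> exact h'.1.1.2
        rw [h1] at h2; exact Bool.false_ne_true h2
      have hunion : ((s ×ˢ s).filter (fun p => G.Adj p.1 p.2))
          = (A00 ∪ A01) ∪ (A10 ∪ A11) := by
        ext ⟨a, b⟩
        simp only [Finset.mem_union, hA00, hA01, hA10, hA11, mem_filter, mem_product,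
          hs0, hs1, mem_filter]
        constructor
        · rintro ⟨⟨ha, hb⟩, hadj⟩
          cases ha0 : a 0 <;> cases hb0 : b 0 <;> tauto
        · intro hh
          refine ⟨⟨?_, ?_⟩, ?_⟩ <;> tauto
      rw [EO]
      rw [hunion, Finset.card_union_of_disjoint hd3, Finset.card_union_of_disjoint hd1,
        Finset.card_union_of_disjoint hd2]
      ring
    -- identify pieces
    have key00 : A00.card = EO n sf := by
      rw [EO]
      apply Finset.card_bij (fun p _ => (tl p.1, tl p.2))
      · rintro ⟨a, b⟩ hp
        simp only [hA00, mem_filter, mem_product] at hp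
        obtain ⟨⟨ha, hb⟩, hadj⟩ := hp
        have ha0 : a 0 = false := (Finset.mem_filter.mp ha).2
        have hb0 : b 0 = false := (Finset.mem_filter.mp hb).2
        rw [cube_adj_succ] at hadj
        rcases hadj with ⟨-, hadj⟩ | ⟨hne, -⟩
        · simp only [mem_filter, mem_product]
          exact ⟨⟨Finset.mem_image_of_mem _ ha, Finset.mem_image_of_mem _ hb⟩, hadj⟩
        · exact absurd (ha0.trans hb0.symm) hne
      · rintro ⟨a, b⟩ hp ⟨a', b'⟩ hp' heq
        simp only [hA00, mem_filter, mem_product] at hp hp'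
        simp only [Prod.mk.injEq] at heq
        have := hinj0 (Finset.mem_coe.mpr hp.1.1) (Finset.mem_coe.mpr hp'.1.1) heq.1
        have := hinj0 (Finset.mem_coe.mpr hp.1.2) (Finset.mem_coe.mpr hp'.1.2) heq.2
        simp_all [Prod.ext_iff]
      · rintro ⟨u, v⟩ hq
        simp only [mem_filter, mem_product, hsf, Finset.mem_image] at hq
        obtain ⟨⟨⟨a, ha, rfl⟩, ⟨b, hb, rfl⟩⟩, hadj⟩ := hq
        refine ⟨(a, b), ?_, rfl⟩
        simp only [hA00, mem_filter, mem_product]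
        refine ⟨⟨ha, hb⟩, ?_⟩
        rw [cube_adj_succ]
        exact Or.inl ⟨((Finset.mem_filter.mp ha).2).trans ((Finset.mem_filter.mp hb).2).symm,
          hadj⟩
    have key11 : A11.card = EO n st := by
      rw [EO]
      apply Finset.card_bij (fun p _ => (tl p.1, tl p.2))
      · rintro ⟨a, b⟩ hp
        simp only [hA11, mem_filter, mem_product] at hp
        obtain ⟨⟨ha, hb⟩, hadj⟩ := hp
        have ha0 : a 0 = true := (Finset.mem_filter.mp ha).2
        have hb0 : b 0 = true := (Finset.mem_filter.mp hb).2
        rw [cube_adj_succ] at hadj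
        rcases hadj with ⟨-, hadj⟩ | ⟨hne, -⟩
        · simp only [mem_filter, mem_product]
          exact ⟨⟨Finset.mem_image_of_mem _ ha, Finset.mem_image_of_mem _ hb⟩, hadj⟩
        · exact absurd (ha0.trans hb0.symm) hne
      · rintro ⟨a, b⟩ hp ⟨a', b'⟩ hp' heq
        simp only [hA11, mem_filter, mem_product] at hp hp'
        simp only [Prod.mk.injEq] at heq
        have := hinj1 (Finset.mem_coe.mpr hp.1.1) (Finset.mem_coe.mpr hp'.1.1) heq.1
        have := hinj1 (Finset.mem_coe.mpr hp.1.2) (Finset.mem_coe.mpr hp'.1.2) heq.2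
        simp_all [Prod.ext_iff]
      · rintro ⟨u, v⟩ hq
        simp only [mem_filter, mem_product, hst, Finset.mem_image] at hq
        obtain ⟨⟨⟨a, ha, rfl⟩, ⟨b, hb, rfl⟩⟩, hadj⟩ := hq
        refine ⟨(a, b), ?_, rfl⟩
        simp only [hA11, mem_filter, mem_product]
        refine ⟨⟨ha, hb⟩, ?_⟩
        rw [cube_adj_succ]
        exact Or.inl ⟨((Finset.mem_filter.mp ha).2).trans ((Finset.mem_filter.mp hb).2).symm,
          hadj⟩
    have key01 : A01.card = (sf ∩ st).card := by
      apply Finset.card_bij (fun p _ => tl p.1)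
      · rintro ⟨a, b⟩ hp
        simp only [hA01, mem_filter, mem_product] at hp
        obtain ⟨⟨ha, hb⟩, hadj⟩ := hp
        have ha0 : a 0 = false := (Finset.mem_filter.mp ha).2
        have hb0 : b 0 = true := (Finset.mem_filter.mp hb).2
        rw [cube_adj_succ] at hadj
        rcases hadj with ⟨heq0, -⟩ | ⟨-, htl⟩
        · rw [ha0, hb0] at heq0; exact absurd heq0 Bool.false_ne_true
        · rw [Finset.mem_inter]
          exact ⟨Finset.mem_image_of_mem _ ha, htl ▸ Finset.mem_image_of_mem _ hb⟩
      · rintro ⟨a, b⟩ hp ⟨a', b'⟩ hp' heq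
        simp only [hA01, mem_filter, mem_product] at hp hp'
        have htb : tl a = tl b := by
          have := hp.2; rw [cube_adj_succ] at this
          rcases this with ⟨heq0, -⟩ | ⟨-, htl⟩
          · rw [(Finset.mem_filter.mp hp.1.1).2, (Finset.mem_filter.mp hp.1.2).2] at heq0
            exact absurd heq0 Bool.false_ne_true
          · exact htl
        have htb' : tl a' = tl b' := by
          have := hp'.2; rw [cube_adj_succ] at this
          rcases this with ⟨heq0, -⟩ | ⟨-, htl⟩
          · rw [(Finset.mem_filter.mp hp'.1.1).2, (Finset.mem_filter.mp hp'.1.2).2] at heq0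
            exact absurd heq0 Bool.false_ne_true
          · exact htl
        have h1 := hinj0 (Finset.mem_coe.mpr hp.1.1) (Finset.mem_coe.mpr hp'.1.1) heq
        have h2 : b = b' := hinj1 (Finset.mem_coe.mpr hp.1.2) (Finset.mem_coe.mpr hp'.1.2)
          (by rw [← htb, ← htb', heq])
        simp_all [Prod.ext_iff]
      · intro z hz
        rw [Finset.mem_inter] at hz
        obtain ⟨a, ha, rfl⟩ := Finset.mem_image.mp hz.1
        obtain ⟨b, hb, htlb⟩ := Finset.mem_image.mp hz.2
        refine ⟨(a, b), ?_, rfl⟩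
        simp only [hA01, mem_filter, mem_product]
        refine ⟨⟨ha, hb⟩, ?_⟩
        rw [cube_adj_succ]
        refine Or.inr ⟨?_, htlb.symm⟩
        rw [(Finset.mem_filter.mp ha).2, (Finset.mem_filter.mp hb).2]
        exact Bool.false_ne_true
    have key10 : A10.card = (sf ∩ st).card := by
      rw [← key01, hA10, hA01]
      apply Finset.card_bij (fun p _ => (p.2, p.1))
      · rintro ⟨a, b⟩ hp
        simp only [mem_filter, mem_product] at hp ⊢
        exact ⟨⟨hp.1.2, hp.1.1⟩, hp.2.symm⟩
      · rintro ⟨a, b⟩ - ⟨a', b'⟩ - heq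
        simp_all [Prod.ext_iff]
      · rintro ⟨a, b⟩ hq
        simp only [mem_filter, mem_product] at hq
        exact ⟨(b, a), by simp only [mem_filter, mem_product]; exact ⟨⟨hq.1.2, hq.1.1⟩, hq.2.symm⟩, rfl⟩
    -- now combine
    have hcle : (sf ∩ st).card ≤ min sf.card st.card :=
      le_min (Finset.card_le_card Finset.inter_subset_left)
        (Finset.card_le_card Finset.inter_subset_right)
    have hmix := mix sf.card st.card (sf ∩ st).card hcle
    have ihf := ih sf
    have iht := ih st
    have hlog2 : (0:ℝ) ≤ Real.log 2 := Real.log_nonneg (by norm_num)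
    have hEO : (EO (n+1) s : ℝ) = (EO n sf : ℝ) + EO n st + 2 * (sf ∩ st).card := by
      rw [hsplit, key00, key01, key10, key11]; push_cast; ring
    have hscard : (s.card : ℝ) = (sf.card : ℝ) + st.card := by
      rw [hcard, hcf, hct]; push_cast; ring
    calc (EO (n+1) s : ℝ) * Real.log 2
        = (EO n sf : ℝ) * Real.log 2 + (EO n st : ℝ) * Real.log 2
          + 2 * (sf ∩ st).card * Real.log 2 := by rw [hEO]; ring
      _ ≤ (sf.card : ℝ) * Real.log sf.card + (st.card : ℝ) * Real.log st.card
          + 2 * (sf ∩ st).card * Real.log 2 := by linarith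
      _ ≤ ((sf.card : ℝ) + st.card) * Real.log ((sf.card : ℝ) + st.card) := by
          have : ((sf.card : ℝ) + st.card) = ((sf.card + st.card : ℕ) : ℝ) := by push_cast; ring
          rw [this]
          convert hmix using 3 <;> push_cast <;> ring
      _ = s.card * Real.log s.card := by rw [hscard]

lemma two_pow_ge (k : ℕ) (hk : 1 ≤ k) : k ≤ 2 ^ (k - 1) := by
  have hlt := Nat.succ_le_of_lt (Nat.lt_two_pow_self (n := k-1))
  calc k = (k-1) + 1 := by omega
  _ ≤ 2^(k-1) := hlt

lemma final_combine (n h t EOv BD : ℕ) (h1 : 1 ≤ h) (h2 : h + 1 ≤ n)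
    (ht1 : 1 ≤ t) (htub : t ≤ 2 ^ (n - 1))
    (hsum : EOv + BD = n * t) (hmin : h * t ≤ EOv)
    (hiso : (EOv : ℝ) * Real.log 2 ≤ (t : ℝ) * Real.log t) :
    2 ^ h * (n - h) ≤ BD := by
  have hln2 : (0:ℝ) < Real.log 2 := Real.log_pos (by norm_num)
  have ht0 : (0:ℝ) < t := by exact_mod_cast ht1
  -- t ≥ 2^h
  have htlb : (2:ℝ) ^ h ≤ t := by
    have hh : (h:ℝ) * Real.log 2 ≤ Real.log t := by
      have : (h:ℝ) * t * Real.log 2 ≤ t * Real.log t := by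
        calc (h:ℝ) * t * Real.log 2 ≤ (EOv:ℝ) * Real.log 2 := by
              have : (h * t : ℝ) ≤ EOv := by exact_mod_cast hmin
              nlinarith
        _ ≤ (t:ℝ) * Real.log t := hiso
      nlinarith
    have : Real.log ((2:ℝ) ^ h) ≤ Real.log t := by
      rw [Real.log_pow]; exact hh
    exact (Real.log_le_log_iff (by positivity) ht0).mp this
  -- t ≤ 2^(n-1)
  have htub' : (t:ℝ) ≤ (2:ℝ) ^ (n-1) := by exact_mod_cast htub
  have hab : ((2:ℝ) ^ h) ≤ (2:ℝ) ^ (n-1) := by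
    apply pow_le_pow_right₀ (by norm_num)
    omega
  -- segment decomposition
  have hmem : (t:ℝ) ∈ segment ℝ ((2:ℝ)^h) ((2:ℝ)^(n-1)) := by
    rw [segment_eq_Icc hab]
    exact Set.mem_Icc.mpr ⟨htlb, htub'⟩
  obtain ⟨α, β, hα, hβ, hαβ, hx⟩ := hmem
  set a : ℝ := (2:ℝ)^h with ha
  set b : ℝ := (2:ℝ)^(n-1) with hb
  have ha0 : (0:ℝ) ≤ a := by positivity
  have hb0 : (0:ℝ) ≤ b := by positivity
  have hcvx := Real.convexOn_mul_log.2 (Set.mem_Ici.mpr ha0) (Set.mem_Ici.mpr hb0) hα hβ hαβ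
  simp only [smul_eq_mul] at hcvx hx
  -- g values
  have hga : a * (n * Real.log 2) - a * Real.log a = a * ((n:ℝ) - h) * Real.log 2 := by
    rw [ha, Real.log_pow]; ring
  have hgb : b * (n * Real.log 2) - b * Real.log b = b * ((n:ℝ) - (n-1:ℕ)) * Real.log 2 := by
    rw [hb, Real.log_pow]; ring
  have hn1 : ((n-1:ℕ) : ℝ) = (n:ℝ) - 1 := by
    have : 1 ≤ n := by omega
    push_cast [this]; ring
  have hgb' : b * (n * Real.log 2) - b * Real.log b = b * Real.log 2 := by
    rw [hgb, hn1]; ring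
  -- target value
  set m : ℝ := (2:ℝ)^h * ((n:ℝ) - h) * Real.log 2 with hm
  have hnh : (1:ℝ) ≤ (n:ℝ) - h := by
    have : (h:ℝ) + 1 ≤ n := by exact_mod_cast h2
    linarith
  have hgbm : m ≤ b * (n * Real.log 2) - b * Real.log b := by
    rw [hgb', hm]
    have key2 : (2:ℝ)^h * ((n:ℝ) - h) ≤ b := by
      have hnat : 2^h * (n - h) ≤ 2^(n-1) := by
        calc 2^h * (n-h) ≤ 2^h * 2^(n-h-1) := by
              exact Nat.mul_le_mul_left _ (two_pow_ge (n-h) (by omega))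
        _ = 2^(n-1) := by rw [← pow_add]; congr 1; omega
      have : ((2^h * (n-h) : ℕ) : ℝ) ≤ ((2^(n-1) : ℕ) : ℝ) := by exact_mod_cast hnat
      calc (2:ℝ)^h * ((n:ℝ) - h) = ((2^h * (n-h) : ℕ) : ℝ) := by
            push_cast [Nat.cast_sub (by omega : h ≤ n)]; ring
      _ ≤ ((2^(n-1):ℕ):ℝ) := this
      _ = b := by rw [hb]; push_cast; ring
    exact mul_le_mul_of_nonneg_right key2 hln2.le
  -- concavity bound : g t ≥ m
  have hgt : m ≤ (t:ℝ) * (n * Real.log 2) - (t:ℝ) * Real.log t := by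
    have h1' : (t:ℝ) * Real.log t ≤ α * (a * Real.log a) + β * (b * Real.log b) := by
      rw [← hx]; exact hcvx
    have h2' : (t:ℝ) * (n * Real.log 2) = α * (a * (n * Real.log 2)) + β * (b * (n*Real.log 2)) := by
      rw [← hx]; ring
    have h3' : α * (a * (n*Real.log 2) - a * Real.log a) + β * (b * (n*Real.log 2) - b * Real.log b)
        ≤ (t:ℝ) * (n * Real.log 2) - (t:ℝ) * Real.log t := by
      rw [h2']; linarith [h1']
    calc m = α * m + β * m := by rw [← add_mul, hαβ, one_mul]
    _ ≤ α * (a * (n*Real.log 2) - a * Real.log a) + β * (b * (n*Real.log 2) - b * Real.log b) := by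
        have hb2 := mul_le_mul_of_nonneg_left hgbm hβ
        rw [hga]
        linarith [hb2]
    _ ≤ _ := h3'
  -- BD bound
  have hBD : ((2:ℝ)^h * ((n:ℝ) - h)) ≤ BD := by
    have hBDr : (BD:ℝ) = (n:ℝ) * t - EOv := by
      have : (EOv:ℝ) + BD = (n:ℝ) * t := by exact_mod_cast hsum
      linarith
    have hfin : (BD:ℝ) * Real.log 2 ≥ m := by
      rw [hBDr, sub_mul]
      have h4' : (n:ℝ) * t * Real.log 2 - (t:ℝ) * Real.log t ≥ m := by
        nlinarith [hgt]
      linarith [hiso]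
    rw [hm] at hfin
    exact (mul_le_mul_iff_left₀ hln2).mp hfin
  have : ((2^h * (n-h) : ℕ) : ℝ) ≤ (BD : ℝ) := by
    calc ((2^h * (n-h) : ℕ) : ℝ) = (2:ℝ)^h * ((n:ℝ) - h) := by
          push_cast [Nat.cast_sub (by omega : h ≤ n)]; ring
    _ ≤ BD := hBD
  exact_mod_cast this

section Upper
variable (n h : ℕ)

/-- merge: first `h` coordinates from `y`, the rest from `v`. -/
def mrg (v : Fin n → Bool) (y : Fin h → Bool) : Fin n → Bool :=
  fun i => if hi : (i : ℕ) < h then y ⟨i, hi⟩ else v i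

variable {n h}

lemma mrg_low (v : Fin n → Bool) (y : Fin h → Bool) (i : Fin n) (hi : (i:ℕ) < h) :
    mrg n h v y i = y ⟨i, hi⟩ := dif_pos hi

lemma mrg_high (v : Fin n → Bool) (y : Fin h → Bool) (i : Fin n) (hi : ¬ (i:ℕ) < h) :
    mrg n h v y i = v i := dif_neg hi

lemma mrg_inj (hle : h ≤ n) (v : Fin n → Bool) : Function.Injective (mrg n h v) := by
  intro y z hyz
  funext j
  have hj : (j:ℕ) < n := lt_of_lt_of_le j.2 hle
  have := congrFun hyz ⟨j, hj⟩
  rw [mrg_low v y ⟨j, hj⟩ j.2, mrg_low v z ⟨j, hj⟩ j.2] at this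
  simpa using this

lemma mem_range_mrg (hle : h ≤ n) (v x : Fin n → Bool) :
    x ∈ Set.range (mrg n h v) ↔ ∀ i : Fin n, ¬ (i:ℕ) < h → x i = v i := by
  constructor
  · rintro ⟨y, rfl⟩ i hi
    exact mrg_high v y i hi
  · intro hx
    refine ⟨fun j => x ⟨j, lt_of_lt_of_le j.2 hle⟩, funext fun i => ?_⟩
    by_cases hi : (i:ℕ) < h
    · rw [mrg_low _ _ _ hi]
    · rw [mrg_high _ _ _ hi, hx i hi]

lemma mrg_self (hle : h ≤ n) (v : Fin n → Bool) :
    v ∈ Set.range (mrg n h v) := (mem_range_mrg hle v v).mpr (fun _ _ => rfl)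

lemma mrg_ne_iff (v : Fin n → Bool) (y z : Fin h → Bool) (i : Fin n) :
    (mrg n h v y i ≠ mrg n h v z i) ↔ ∃ hi : (i:ℕ) < h, y ⟨i, hi⟩ ≠ z ⟨i, hi⟩ := by
  by_cases hi : (i:ℕ) < h
  · rw [mrg_low v y i hi, mrg_low v z i hi]
    simp [hi]
  · rw [mrg_high v y i hi, mrg_high v z i hi]
    simp [hi]

lemma mrg_adj (hle : h ≤ n) (v : Fin n → Bool) (y z : Fin h → Bool) :
    (cubeGraph n).Adj (mrg n h v y) (mrg n h v z) ↔ (cubeGraph h).Adj y z := by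
  constructor
  · rintro ⟨i, hi, hu⟩
    obtain ⟨hlow, hne⟩ := (mrg_ne_iff v y z i).mp hi
    refine ⟨⟨i, hlow⟩, hne, fun j hj => ?_⟩
    have hjn : (j:ℕ) < n := lt_of_lt_of_le j.2 hle
    have hd : mrg n h v y ⟨j, hjn⟩ ≠ mrg n h v z ⟨j, hjn⟩ :=
      (mrg_ne_iff v y z ⟨j, hjn⟩).mpr ⟨j.2, by simpa using hj⟩
    have h5 := congrArg Fin.val (hu _ hd)
    exact Fin.ext h5
  · rintro ⟨j, hj, hu⟩
    have hjn : (j:ℕ) < n := lt_of_lt_of_le j.2 hle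
    refine ⟨⟨j, hjn⟩, (mrg_ne_iff v y z ⟨j, hjn⟩).mpr ⟨j.2, by simpa using hj⟩,
      fun i hi => ?_⟩
    obtain ⟨hlow, hne⟩ := (mrg_ne_iff v y z i).mp hi
    have h5 := congrArg Fin.val (hu _ hne)
    exact Fin.ext (by simpa using h5)

def ext0 (n h : ℕ) : (Fin h → Bool) → (Fin n → Bool) := mrg n h (fun _ => false)

def cutF (n h : ℕ) : Set (Sym2 (Fin n → Bool)) :=
  (fun p : (Fin h → Bool) × Fin n =>
      s(ext0 n h p.1, Function.update (ext0 n h p.1) p.2 (!ext0 n h p.1 p.2))) ''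
    {p | ¬ (p.2 : ℕ) < h}

lemma ext0_high (y : Fin h → Bool) (i : Fin n) (hi : ¬ (i:ℕ) < h) : ext0 n h y i = false :=
  mrg_high _ y i hi

lemma cutF_injOn (hle : h ≤ n) :
    Set.InjOn (fun p : (Fin h → Bool) × Fin n =>
      s(ext0 n h p.1, Function.update (ext0 n h p.1) p.2 (!ext0 n h p.1 p.2)))
      {p | ¬ (p.2 : ℕ) < h} := by
  rintro ⟨y, i⟩ hyi ⟨z, j⟩ hzj heq
  simp only [Set.mem_setOf_eq] at hyi hzj
  simp only [Sym2.eq, Sym2.rel_iff', Prod.mk.injEq, Prod.swap_prod_mk] at heq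
  have hkey : ext0 n h y = ext0 n h z ∧
      Function.update (ext0 n h y) i (!ext0 n h y i) =
        Function.update (ext0 n h z) j (!ext0 n h z j) := by
    rcases heq with ⟨h1, h2⟩ | ⟨h1, h2⟩
    · exact ⟨h1, h2⟩
    · -- swapped case impossible
      exfalso
      have := congrFun h1 j
      rw [ext0_high y j hzj, Function.update_self, ext0_high z j hzj] at this
      simp at this
  obtain ⟨h1, h2⟩ := hkey
  have hyz : y = z := mrg_inj hle _ h1
  subst hyz
  have hij : i = j := flip_injective (ext0 n h y) h2
  rw [hij]

lemma cutF_sub (n h : ℕ) : cutF n h ⊆ (cubeGraph n).edgeSet := by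
  rintro e ⟨⟨y, i⟩, -, rfl⟩
  rw [SimpleGraph.mem_edgeSet, cube_adj_iff]
  exact ⟨i, rfl⟩

lemma walk_closed {V : Type*} {G : SimpleGraph V} {P : V → Prop}
    (hP : ∀ x y, G.Adj x y → P x → P y) {u v : V} (w : G.Walk u v) (hu : P u) : P v := by
  induction w with
  | nil => exact hu
  | cons hadj _ ihw => exact ihw (hP _ _ hadj hu)

lemma not_in_cutF_of_low_agree (x y : Fin n → Bool)
    (hagree : ∀ i : Fin n, ¬ (i:ℕ) < h → x i = y i) : s(x, y) ∉ cutF n h := by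
  rintro ⟨⟨z, i⟩, hzi, heq⟩
  simp only [Set.mem_setOf_eq] at hzi
  have hne : ext0 n h z i ≠ Function.update (ext0 n h z) i (!ext0 n h z i) i := by
    rw [Function.update_self]; cases ext0 n h z i <;> simp
  simp only [Sym2.eq, Sym2.rel_iff', Prod.mk.injEq, Prod.swap_prod_mk] at heq
  rcases heq with ⟨h1, h2⟩ | ⟨h1, h2⟩
  · rw [h2, h1] at hne
    exact hne (hagree i hzi)
  · rw [h2, h1] at hne
    exact hne (hagree i hzi).symm

end Upper

-- ### counting the cut
section count
variable {n h : ℕ}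

open scoped Classical in
lemma card_high (hle : h ≤ n) :
    ((univ : Finset (Fin n)).filter fun i : Fin n => ¬ (i:ℕ) < h).card = n - h := by
  have himg : ((univ : Finset (Fin n)).filter fun i : Fin n => ¬ (i:ℕ) < h)
      = (univ : Finset (Fin (n - h))).image
          (fun k : Fin (n - h) => (⟨h + k.1, by have := k.2; omega⟩ : Fin n)) := by
    ext i
    simp only [Finset.mem_filter, Finset.mem_univ, true_and, Finset.mem_image]
    constructor
    · intro hi
      have hin : (i:ℕ) < n := i.2
      refine ⟨⟨(i:ℕ) - h, by omega⟩, Fin.ext ?_⟩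
      show h + ((i:ℕ) - h) = (i:ℕ)
      omega
    · rintro ⟨k, rfl⟩
      have := k.2
      show ¬ h + (k:ℕ) < h
      omega
  rw [himg, Finset.card_image_of_injective _ (fun k₁ k₂ hk => Fin.ext (by
    have h9 : h + (k₁:ℕ) = h + (k₂:ℕ) := congrArg Fin.val hk
    omega)), Finset.card_univ, Fintype.card_fin]

open scoped Classical in
lemma cutF_ncard (hle : h ≤ n) : (cutF n h).ncard = 2 ^ h * (n - h) := by
  rw [cutF, Set.ncard_image_of_injOn (cutF_injOn hle)]
  have hset : ({p | ¬ (p.2 : ℕ) < h} : Set ((Fin h → Bool) × Fin n))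
      = ↑((univ : Finset (Fin h → Bool)) ×ˢ
          ((univ : Finset (Fin n)).filter fun i : Fin n => ¬ (i:ℕ) < h)) := by
    ext ⟨y, i⟩
    simp
  rw [hset, Set.ncard_coe_finset, Finset.card_product, Finset.card_univ, card_high hle]
  congr 1
  simp [Fintype.card_fun]

lemma cutF_finite (n h : ℕ) : (cutF n h).Finite := Set.toFinite _

end count

-- ### the cut is an embedded edge cut
lemma cutF_isCut {n h : ℕ} (h1 : 1 ≤ h) (h2 : h + 1 ≤ n) :
    IsEmbEdgeCut (cubeGraph n) (cubeGraph h) (cutF n h) := by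
  have hle : h ≤ n := by omega
  set G' := (cubeGraph n).deleteEdges (cutF n h) with hG'
  refine ⟨cutF_sub n h, ?_, ?_⟩
  · -- disconnected
    set P : (Fin n → Bool) → Prop := fun x => ∀ j : Fin n, ¬ (j:ℕ) < h → x j = false with hP
    have hclosed : ∀ x y, G'.Adj x y → P x → P y := by
      intro x y hxy hx
      rw [hG', SimpleGraph.deleteEdges_adj] at hxy
      obtain ⟨hadj, hnF⟩ := hxy
      obtain ⟨i, rfl⟩ := (cube_adj_iff x _).mp hadj
      by_cases hi : (i:ℕ) < h
      · intro j hj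
        have hji : j ≠ i := fun hc => hj (hc ▸ hi)
        rw [Function.update_of_ne hji]
        exact hx j hj
      · exfalso
        apply hnF
        obtain ⟨y', hy'⟩ := (mem_range_mrg hle (fun _ => false) x).mpr hx
        refine ⟨(y', i), hi, ?_⟩
        simp only [ext0]
        rw [hy']
    intro hcon
    have hreach := hcon.preconnected (fun _ => false) (fun _ => true)
    obtain ⟨w⟩ := hreach
    have hPa : P (fun _ => false) := fun _ _ => rfl
    have := walk_closed hclosed w hPa
    have hbad := this ⟨h, by omega⟩ (by simp)
    simp at hbad
  · -- embeddings
    intro v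
    refine ⟨Set.range (mrg n h v), mrg_self hle v, ⟨?_⟩⟩
    refine ⟨⟨fun y => ⟨mrg n h v y, ⟨y, rfl⟩⟩,
      fun a => fun j => a.1 ⟨j, lt_of_lt_of_le j.2 hle⟩, ?_, ?_⟩, ?_⟩
    · intro y
      funext j
      simp only []
      rw [mrg_low v y ⟨j, _⟩ j.2]
    · rintro ⟨x, hx⟩
      apply Subtype.ext
      funext i
      simp only []
      by_cases hi : (i:ℕ) < h
      · rw [mrg_low _ _ i hi]
      · rw [mrg_high _ _ i hi]
        exact ((mem_range_mrg hle v x).mp hx i hi).symm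
    · intro y z
      simp only [Equiv.coe_fn_mk, SimpleGraph.comap_adj, Function.Embedding.coe_subtype]
      rw [SimpleGraph.deleteEdges_adj]
      constructor
      · rintro ⟨hadj, -⟩
        exact (mrg_adj hle v y z).mp hadj
      · intro hyz
        refine ⟨(mrg_adj hle v y z).mpr hyz, ?_⟩
        apply not_in_cutF_of_low_agree
        intro i hi
        rw [mrg_high v y i hi, mrg_high v z i hi]

open scoped Classical in
set_option maxHeartbeats 1000000 in
lemma lower_bound {n h : ℕ} (h1 : 1 ≤ h) (h2 : h + 1 ≤ n)
    (F : Set (Sym2 (Fin n → Bool))) (hfin : F.Finite)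
    (hcut : IsEmbEdgeCut (cubeGraph n) (cubeGraph h) F) :
    2 ^ h * (n - h) ≤ F.ncard := by
  obtain ⟨hsub, hdisc, hemb⟩ := hcut
  set G' := (cubeGraph n).deleteEdges F with hG'
  -- minimum degree h in G'
  have hdeg : ∀ v : Fin n → Bool, h ≤ (univ.filter (G'.Adj v)).card := by
    intro v
    obtain ⟨A, hvA, ⟨φ⟩⟩ := hemb v
    set w0 := φ.symm ⟨v, hvA⟩ with hw0
    have hNcard : (univ.filter ((cubeGraph h).Adj w0)).card = h := cube_degree w0
    rw [← hNcard]
    apply Finset.card_le_card_of_injOn (fun y => ((φ y) : Fin n → Bool))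
    · intro y hy
      simp only [Finset.mem_coe, Finset.mem_filter, Finset.mem_univ, true_and] at hy ⊢
      have hia : (G'.induce A).Adj (φ w0) (φ y) := φ.map_rel_iff.mpr hy
      have hw0v : φ w0 = ⟨v, hvA⟩ := by rw [hw0]; exact RelIso.apply_symm_apply φ ⟨v, hvA⟩
      rw [hw0v] at hia
      exact hia
    · intro y _ z _ hyz
      exact φ.toEquiv.injective (Subtype.ext hyz)
  -- extract a component-like set
  have hnpre : ¬ G'.Preconnected := by
    intro hp
    exact hdisc ⟨hp⟩
  rw [SimpleGraph.Preconnected] at hnpre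
  push_neg at hnpre
  obtain ⟨a, b, hab⟩ := hnpre
  set s : Finset (Fin n → Bool) := univ.filter (fun x => G'.Reachable a x) with hs
  have has : a ∈ s := by
    simp only [hs, Finset.mem_filter, Finset.mem_univ, true_and]
    exact SimpleGraph.Reachable.refl a
  have hbs : b ∈ sᶜ := by simp [hs, hab]
  have hclos_s : ∀ x ∈ s, ∀ y, G'.Adj x y → y ∈ s := by
    intro x hx y hxy
    simp only [hs, Finset.mem_filter, Finset.mem_univ, true_and] at hx ⊢
    exact hx.trans hxy.reachable
  have hclos_sc : ∀ x ∈ sᶜ, ∀ y, G'.Adj x y → y ∈ sᶜ := by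
    intro x hx y hxy
    rw [Finset.mem_compl] at hx ⊢
    intro hy
    exact hx (hclos_s y hy x hxy.symm)
  have hcards : s.card + sᶜ.card = 2 ^ n := by
    rw [Finset.card_add_card_compl, Fintype.card_fun, Fintype.card_bool, Fintype.card_fin]
  have h2n : 2 ^ n = 2 ^ (n-1) + 2 ^ (n-1) := by
    have hsucc : n - 1 + 1 = n := by omega
    calc 2^n = 2^(n-1+1) := by rw [hsucc]
    _ = 2^(n-1)*2 := pow_succ 2 (n-1)
    _ = 2^(n-1) + 2^(n-1) := by ring
  -- the generic bound for a closed set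
  have inner : ∀ t : Finset (Fin n → Bool), t.Nonempty → t.card ≤ 2 ^ (n-1) →
      (∀ x ∈ t, ∀ y, G'.Adj x y → y ∈ t) → 2 ^ h * (n - h) ≤ F.ncard := by
    intro t htne htub hclos
    have hEOv : EO n t = ((t ×ˢ t).filter
        (fun p : (Fin n → Bool) × (Fin n → Bool) => (cubeGraph n).Adj p.1 p.2)).card := rfl
    set BD := ((t ×ˢ tᶜ).filter
      (fun p : (Fin n → Bool) × (Fin n → Bool) => (cubeGraph n).Adj p.1 p.2)).card with hBD
    -- sum identity
    have hsum : EO n t + BD = n * t.card := by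
      have hu : (t ×ˢ (univ : Finset (Fin n → Bool))).filter (fun p : (Fin n → Bool) × (Fin n → Bool) => (cubeGraph n).Adj p.1 p.2)
          = ((t ×ˢ t).filter (fun p : (Fin n → Bool) × (Fin n → Bool) => (cubeGraph n).Adj p.1 p.2)) ∪ ((t ×ˢ tᶜ).filter (fun p : (Fin n → Bool) × (Fin n → Bool) => (cubeGraph n).Adj p.1 p.2)) := by
        ext ⟨x, y⟩
        simp only [Finset.mem_filter, Finset.mem_union, Finset.mem_product, Finset.mem_univ,
          Finset.mem_compl, true_and, and_true]
        by_cases hy : y ∈ t <;> tauto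
      have hdisj : Disjoint ((t ×ˢ t).filter (fun p : (Fin n → Bool) × (Fin n → Bool) => (cubeGraph n).Adj p.1 p.2)) ((t ×ˢ tᶜ).filter (fun p : (Fin n → Bool) × (Fin n → Bool) => (cubeGraph n).Adj p.1 p.2)) := by
        rw [Finset.disjoint_left]
        rintro ⟨x, y⟩ hp hq
        simp only [Finset.mem_filter, Finset.mem_product, Finset.mem_compl] at hp hq
        exact hq.1.2 hp.1.2
      have hbu : (t ×ˢ (univ : Finset (Fin n → Bool))).filter (fun p : (Fin n → Bool) × (Fin n → Bool) => (cubeGraph n).Adj p.1 p.2)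
          = t.biUnion (fun x => {x} ×ˢ (univ.filter ((cubeGraph n).Adj x))) := by
        ext ⟨x, y⟩
        simp only [Finset.mem_filter, Finset.mem_product, Finset.mem_univ, true_and, and_true,
          Finset.mem_biUnion, Finset.mem_singleton]
        constructor
        · rintro ⟨hx, hadj⟩
          exact ⟨x, hx, rfl, hadj⟩
        · rintro ⟨x', hx', rfl, hadj⟩
          exact ⟨hx', hadj⟩
      have hdisj2 : ∀ x ∈ t, ∀ x' ∈ t, x ≠ x' → Disjoint
          ({x} ×ˢ (univ.filter ((cubeGraph n).Adj x)))
          ({x'} ×ˢ (univ.filter ((cubeGraph n).Adj x'))) := by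
        rintro x - x' - hxx'
        rw [Finset.disjoint_left]
        rintro ⟨u, w⟩ hu hw
        simp only [Finset.mem_product, Finset.mem_singleton] at hu hw
        exact hxx' (hu.1.symm.trans hw.1)
      have hcardu : ((t ×ˢ (univ : Finset (Fin n → Bool))).filter (fun p : (Fin n → Bool) × (Fin n → Bool) => (cubeGraph n).Adj p.1 p.2)).card = n * t.card := by
        rw [hbu, Finset.card_biUnion hdisj2]
        have hrow : ∀ x ∈ t, ({x} ×ˢ (univ.filter ((cubeGraph n).Adj x))).card = n := by
          intro x _
          rw [Finset.card_product, Finset.card_singleton, one_mul, cube_degree x]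
        rw [Finset.sum_congr rfl hrow, Finset.sum_const, smul_eq_mul, Nat.mul_comm]
      have hcu := congrArg Finset.card hu
      rw [hcardu, Finset.card_union_of_disjoint hdisj] at hcu
      rw [hEOv]
      omega
    -- min degree bound
    have hmin : h * t.card ≤ EO n t := by
      have hbu2 : ((t ×ˢ t).filter (fun p : (Fin n → Bool) × (Fin n → Bool) => (cubeGraph n).Adj p.1 p.2))
          = t.biUnion (fun x => {x} ×ˢ (t.filter ((cubeGraph n).Adj x))) := by
        ext ⟨x, y⟩
        simp only [Finset.mem_filter, Finset.mem_product, Finset.mem_biUnion,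
          Finset.mem_singleton]
        constructor
        · rintro ⟨⟨hx, hy⟩, hadj⟩
          exact ⟨x, hx, rfl, hy, hadj⟩
        · rintro ⟨x', hx', rfl, hy, hadj⟩
          exact ⟨⟨hx', hy⟩, hadj⟩
      rw [hEOv, hbu2, Finset.card_biUnion]
      · calc h * t.card = t.card • h := by rw [smul_eq_mul]; ring
        _ ≤ ∑ x ∈ t, ({x} ×ˢ (t.filter ((cubeGraph n).Adj x))).card := by
            apply Finset.card_nsmul_le_sum
            intro x hx
            rw [Finset.card_product, Finset.card_singleton, one_mul]
            calc h ≤ (univ.filter (G'.Adj x)).card := hdeg x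
            _ ≤ (t.filter ((cubeGraph n).Adj x)).card := by
                apply Finset.card_le_card
                intro y hy
                simp only [Finset.mem_filter, Finset.mem_univ, true_and] at hy ⊢
                have hadj := hy
                rw [hG', SimpleGraph.deleteEdges_adj] at hadj
                exact ⟨hclos x hx y hy, hadj.1⟩
      · rintro x - x' - hxx'
        rw [Function.onFun, Finset.disjoint_left]
        rintro ⟨u, w⟩ hu hw
        simp only [Finset.mem_product, Finset.mem_singleton] at hu hw
        exact hxx' (hu.1.symm.trans hw.1)
    -- BD ≤ ncard F
    have hBDF : BD ≤ F.ncard := by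
      rw [Set.ncard_eq_toFinset_card _ hfin, hBD]
      apply Finset.card_le_card_of_injOn (fun p => s(p.1, p.2))
      · rintro ⟨x, y⟩ hp
        simp only [Finset.mem_coe, Finset.mem_filter, Finset.mem_product, Finset.mem_compl] at hp
        rw [Finset.mem_coe, Set.Finite.mem_toFinset]
        by_contra hFm
        have : G'.Adj x y := by
          rw [hG', SimpleGraph.deleteEdges_adj]
          exact ⟨hp.2, hFm⟩
        exact hp.1.2 (hclos x hp.1.1 y this)
      · rintro ⟨x, y⟩ hp ⟨x', y'⟩ hp' heq
        simp only [Finset.mem_coe, Finset.mem_filter, Finset.mem_product,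
          Finset.mem_compl] at hp hp'
        simp only [Sym2.eq, Sym2.rel_iff', Prod.mk.injEq, Prod.swap_prod_mk] at heq
        rcases heq with ⟨rfl, rfl⟩ | ⟨rfl, rfl⟩
        · rfl
        · exact absurd hp'.1.1 hp.1.2
    -- combine
    have := final_combine n h t.card (EO n t) BD h1 h2
      (Finset.card_pos.mpr htne) htub hsum hmin (iso_ineq n t)
    omega
  -- pick the small side
  by_cases hsmall : s.card ≤ 2 ^ (n-1)
  · exact inner s ⟨a, has⟩ hsmall hclos_s
  · apply inner sᶜ ⟨b, hbs⟩ (by omega) hclos_sc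

end CubeProofAux

/-- `η_h(Q_n) = 2^h (n-h)` for `1 ≤ h ≤ n-1`. -/
theorem stmt4 (n h : ℕ) (h1 : 1 ≤ h) (h2 : h + 1 ≤ n) :
    embEdgeConn (cubeGraph n) (cubeGraph h) = 2 ^ h * (n - h) := by
  have hle : h ≤ n := by omega
  have hmem : 2 ^ h * (n - h) ∈
      {k | ∃ F : Set (Sym2 (Fin n → Bool)), F.Finite ∧ F.ncard = k ∧
        IsEmbEdgeCut (cubeGraph n) (cubeGraph h) F} :=
    ⟨cutF n h, cutF_finite n h, cutF_ncard hle, cutF_isCut h1 h2⟩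
  refine le_antisymm (Nat.sInf_le hmem) (le_csInf ⟨_, hmem⟩ ?_)
  rintro k ⟨F, hfin, rfl, hcut⟩
  exact lower_bound h1 h2 F hfin hcut
end

section
/- Let X be the vertex set { p_1 … p_h 1 2 ⋯ (n−h) : p_i ∈ {n−h+1,…,n} } in the star graph S_n with 1 ≤ h ≤ n−1. Then every vertex of X has exactly n−h neighbors outside X, every vertex outside X adjacent to X has exactly one neighbor in X, and the set T of neighbors of X outside X has cardinality h!(n−h). -/
open SimpleGraph

section Helpers
variable {n h : ℕ} [NeZero n]

def memX (h : ℕ) (p : Equiv.Perm (Fin n)) : Prop :=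
  ∀ j : Fin n, h ≤ (j : ℕ) → ((p j : ℕ) = (j : ℕ) - h)


lemma ne_zero_of_h_le {i : Fin n} (h1 : 1 ≤ h) (hi : h ≤ (i : ℕ)) : i ≠ 0 := by
  intro e
  rw [e] at hi
  simp at hi
  omega

lemma memX_mul_swap {p : Equiv.Perm (Fin n)} (hp : memX h p) {i : Fin n}
    (hi : (i : ℕ) < h) : memX h (p * Equiv.swap 0 i) := by
  intro j hj
  have hj0 : j ≠ 0 := by
    intro e; rw [e] at hj; simp at hj; omega
  have hji : j ≠ i := by
    intro e; rw [e] at hj; omega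
  rw [Equiv.Perm.mul_apply, Equiv.swap_apply_of_ne_of_ne hj0 hji]
  exact hp j hj

lemma p0_large {p : Equiv.Perm (Fin n)} (h1 : 1 ≤ h) (h2 : h + 1 ≤ n)
    (hp : memX h p) : n - h ≤ (p 0 : ℕ) := by
  by_contra hc
  push_neg at hc
  have hjlt : (p 0 : ℕ) + h < n := by omega
  set j : Fin n := ⟨(p 0 : ℕ) + h, hjlt⟩ with hjdef
  have hval : (p j : ℕ) = (p 0 : ℕ) := by
    rw [hp j (by simp [hjdef])]
    simp [hjdef]
  have hpj : p j = p 0 := Fin.val_injective hval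
  have hj0 : j = 0 := p.injective hpj
  have := congrArg Fin.val hj0
  simp [hjdef] at this
  omega

lemma not_memX_mul_swap {p : Equiv.Perm (Fin n)} (h1 : 1 ≤ h) (h2 : h + 1 ≤ n)
    (hp : memX h p) {i : Fin n} (hi : h ≤ (i : ℕ)) : ¬ memX h (p * Equiv.swap 0 i) := by
  intro hq
  have hv := hq i hi
  rw [Equiv.Perm.mul_apply, Equiv.swap_apply_right] at hv
  have := p0_large h1 h2 hp
  have : (i : ℕ) < n := i.isLt
  omega

/-- Value of `q 0` when `q = p * swap 0 i` with `p ∈ X` and `h ≤ i`. -/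
lemma val_at_zero {p : Equiv.Perm (Fin n)} (hp : memX h p) {i : Fin n} (hi : h ≤ (i : ℕ)) :
    (((p * Equiv.swap 0 i) 0 : Fin n) : ℕ) = (i : ℕ) - h := by
  rw [Equiv.Perm.mul_apply, Equiv.swap_apply_left]
  exact hp i hi


lemma ofSubtype_inj {α : Type*} {p : α → Prop} [DecidablePred p] :
    Function.Injective (Equiv.Perm.ofSubtype (p := p)) := by
  intro σ τ hst
  ext x
  have h1 := Equiv.Perm.ofSubtype_apply_of_mem σ x.2
  have h2 := Equiv.Perm.ofSubtype_apply_of_mem τ x.2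
  rw [← Subtype.coe_eta x x.2, ← h1, ← h2, hst]

lemma ncard_memX (h1 : 1 ≤ h) (h2 : h + 1 ≤ n) :
    {p : Equiv.Perm (Fin n) | memX h p}.ncard = Nat.factorial h := by
  set d : Fin n := ⟨n - h, by omega⟩ with hd
  set c : Equiv.Perm (Fin n) := Equiv.addRight d with hc
  have hcval : ∀ j : Fin n, h ≤ (j : ℕ) → ((c j : ℕ) = (j : ℕ) - h) := by
    intro j hj
    show ((j + d : Fin n) : ℕ) = (j : ℕ) - h
    rw [Fin.add_def]
    simp only [hd]
    have hjn : (j : ℕ) < n := j.isLt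
    rw [Nat.mod_eq_sub_mod (by omega), Nat.mod_eq_of_lt (by omega)]
    omega
  set φ : Equiv.Perm {x : Fin n // (x : ℕ) < h} → Equiv.Perm (Fin n) :=
    fun σ => c * Equiv.Perm.ofSubtype σ with hφ
  have hinj : Function.Injective φ := by
    intro a b hab
    exact ofSubtype_inj (mul_left_cancel hab)
  have hrange : {p : Equiv.Perm (Fin n) | memX h p} = Set.range φ := by
    ext p
    constructor
    · intro hp
      set σ₀ : Equiv.Perm (Fin n) := c⁻¹ * p with hσ₀
      have hfix : ∀ j : Fin n, h ≤ (j : ℕ) → σ₀ j = j := by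
        intro j hj
        have : c j = p j := Fin.val_injective (by rw [hcval j hj, hp j hj])
        show c⁻¹ (p j) = j
        rw [← this]
        simp
      have hfwd : ∀ x : Fin n, (x : ℕ) < h → (σ₀ x : ℕ) < h := by
        intro x hx
        by_contra hcon
        push_neg at hcon
        have := σ₀.injective (hfix (σ₀ x) hcon)
        omega
      have hiff : ∀ x : Fin n, (x : ℕ) < h ↔ ((σ₀ x : Fin n) : ℕ) < h := by
        intro x
        constructor
        · exact hfwd x
        · intro hx
          by_contra hcon
          push_neg at hcon
          rw [hfix x hcon] at hx
          omega
      set τ : Equiv.Perm {x : Fin n // (x : ℕ) < h} := σ₀.subtypePerm (fun x => (hiff x).symm) with hτ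
      refine ⟨τ, ?_⟩
      have hofs : Equiv.Perm.ofSubtype τ = σ₀ := by
        ext x
        by_cases hx : (x : ℕ) < h
        · rw [Equiv.Perm.ofSubtype_apply_of_mem τ hx]
          rfl
        · rw [Equiv.Perm.ofSubtype_apply_of_not_mem τ hx]
          push_neg at hx
          exact congrArg Fin.val (hfix x hx).symm
      show c * Equiv.Perm.ofSubtype τ = p
      rw [hofs, hσ₀, mul_inv_cancel_left]
    · rintro ⟨σ, rfl⟩
      intro j hj
      show ((c (Equiv.Perm.ofSubtype σ j) : Fin n) : ℕ) = (j : ℕ) - h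
      rw [Equiv.Perm.ofSubtype_apply_of_not_mem σ (by omega)]
      exact hcval j hj
  have hcardS : Fintype.card {x : Fin n // (x : ℕ) < h} = h := by
    have e : {x : Fin n // (x : ℕ) < h} ≃ Fin h :=
      { toFun := fun x => ⟨x.1.1, x.2⟩
        invFun := fun y => ⟨⟨y.1, by omega⟩, y.2⟩
        left_inv := fun x => rfl
        right_inv := fun y => rfl }
    rw [Fintype.card_congr e, Fintype.card_fin]
  rw [hrange, ← Nat.card_coe_set_eq, Nat.card_range_of_injective hinj,
    Nat.card_eq_fintype_card, Fintype.card_perm, hcardS]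


lemma ncard_Ici (h2 : h + 1 ≤ n) : {i : Fin n | h ≤ (i : ℕ)}.ncard = n - h := by
  have he : {i : Fin n | h ≤ (i : ℕ)} = ↑(Finset.Ici (⟨h, by omega⟩ : Fin n)) := by
    ext i
    simp [Fin.le_def]
  rw [he, Set.ncard_coe_finset, Fin.card_Ici]

lemma part1 (h1 : 1 ≤ h) (h2 : h + 1 ≤ n) (p : Equiv.Perm (Fin n)) (hp : memX h p) :
    ({q | (_root_.starGraph n).Adj p q} \ {p' : Equiv.Perm (Fin n) | memX h p'}).ncard = n - h := by
  have hkey : {q | (_root_.starGraph n).Adj p q} \ {p' : Equiv.Perm (Fin n) | memX h p'} =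
      (fun i : Fin n => p * Equiv.swap 0 i) '' {i : Fin n | h ≤ (i : ℕ)} := by
    ext q
    simp only [Set.mem_diff, Set.mem_setOf_eq, Set.mem_image]
    constructor
    · rintro ⟨⟨i, hi0, rfl⟩, hq⟩
      refine ⟨i, ?_, rfl⟩
      by_contra hcon
      push_neg at hcon
      exact hq (memX_mul_swap hp hcon)
    · rintro ⟨i, hi, rfl⟩
      exact ⟨⟨i, ne_zero_of_h_le h1 hi, rfl⟩, not_memX_mul_swap h1 h2 hp hi⟩
  rw [hkey, Set.ncard_image_of_injOn, ncard_Ici h2]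
  intro i _ j _ hij
  have h3 : Equiv.swap (0 : Fin n) i 0 = Equiv.swap (0 : Fin n) j 0 := by
    rw [mul_left_cancel hij]
  rwa [Equiv.swap_apply_left, Equiv.swap_apply_left] at h3

lemma part2 (h1 : 1 ≤ h) (h2 : h + 1 ≤ n) (q : Equiv.Perm (Fin n)) (hq : ¬ memX h q)
    (hex : ∃ p, memX h p ∧ (_root_.starGraph n).Adj q p) :
    ({p | memX h p ∧ (_root_.starGraph n).Adj q p}).ncard = 1 := by
  obtain ⟨p₀, hp₀, hadj₀⟩ := hex
  have hstep : ∀ p, memX h p → (_root_.starGraph n).Adj q p →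
      ∃ i : Fin n, h ≤ (i : ℕ) ∧ p = q * Equiv.swap 0 i ∧ ((q 0 : Fin n) : ℕ) = (i : ℕ) - h := by
    intro p hp hadj
    obtain ⟨i, hi0, hpq⟩ := hadj
    have hqp : q = p * Equiv.swap 0 i := by
      rw [hpq, mul_assoc, Equiv.swap_mul_self, mul_one]
    have hih : h ≤ (i : ℕ) := by
      by_contra hcon
      push_neg at hcon
      exact hq (hqp ▸ memX_mul_swap hp hcon)
    refine ⟨i, hih, hpq, ?_⟩
    rw [hqp]
    exact val_at_zero hp hih
  refine Set.ncard_eq_one.mpr ⟨p₀, Set.eq_singleton_iff_unique_mem.mpr ⟨⟨hp₀, hadj₀⟩, ?_⟩⟩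
  rintro p ⟨hp, hadjp⟩
  obtain ⟨i, hih, hpe, hq0⟩ := hstep p hp hadjp
  obtain ⟨i₀, hih₀, hpe₀, hq0₀⟩ := hstep p₀ hp₀ hadj₀
  have hii : i = i₀ := Fin.val_injective (by omega)
  rw [hpe, hpe₀, hii]

lemma part3 (h1 : 1 ≤ h) (h2 : h + 1 ≤ n) :
    {q | ¬ memX h q ∧ ∃ p, memX h p ∧ (_root_.starGraph n).Adj p q}.ncard
      = Nat.factorial h * (n - h) := by
  have hkey : {q | ¬ memX h q ∧ ∃ p, memX h p ∧ (_root_.starGraph n).Adj p q} =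
      (fun pi : Equiv.Perm (Fin n) × Fin n => pi.1 * Equiv.swap 0 pi.2) ''
        ({p : Equiv.Perm (Fin n) | memX h p} ×ˢ {i : Fin n | h ≤ (i : ℕ)}) := by
    ext q
    simp only [Set.mem_setOf_eq, Set.mem_image, Set.mem_prod]
    constructor
    · rintro ⟨hq, p, hp, i, hi0, rfl⟩
      refine ⟨(p, i), ⟨hp, ?_⟩, rfl⟩
      by_contra hcon
      push_neg at hcon
      exact hq (memX_mul_swap hp hcon)
    · rintro ⟨⟨p, i⟩, ⟨hp, hi⟩, rfl⟩
      exact ⟨not_memX_mul_swap h1 h2 hp hi, p, hp, i, ne_zero_of_h_le h1 hi, rfl⟩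
  have hinj : Set.InjOn (fun pi : Equiv.Perm (Fin n) × Fin n => pi.1 * Equiv.swap 0 pi.2)
      ({p : Equiv.Perm (Fin n) | memX h p} ×ˢ {i : Fin n | h ≤ (i : ℕ)}) := by
    rintro ⟨p, i⟩ ⟨hp, hi⟩ ⟨p', i'⟩ ⟨hp', hi'⟩ heq
    simp only [Set.mem_setOf_eq] at hp hi hp' hi'
    simp only at heq
    have e1 := val_at_zero hp hi
    have e2 := val_at_zero hp' hi'
    rw [heq] at e1
    have hii : i = i' := Fin.val_injective (by omega)
    have hpp : p = p' := by
      rw [hii] at heq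
      exact mul_right_cancel heq
    rw [Prod.ext_iff]
    exact ⟨hpp, hii⟩
  rw [hkey, Set.ncard_image_of_injOn hinj, ← Nat.card_coe_set_eq,
    Nat.card_congr (Equiv.Set.prod {p : Equiv.Perm (Fin n) | memX h p}
      {i : Fin n | h ≤ (i : ℕ)}), Nat.card_prod,
    Nat.card_coe_set_eq, Nat.card_coe_set_eq, ncard_memX h1 h2, ncard_Ici h2]

end Helpers

/-- With `X = {p : pₕ₊₁ … pₙ = 1 2 ⋯ (n-h)}` in `S_n` (0-indexed: position `j ≥ h`
carries digit `j - h`), every vertex of `X` has exactly `n-h` neighbors outside `X`, every vertex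
outside `X` adjacent to `X` has exactly one neighbor in `X`, and the set `T` of outside neighbors
of `X` has cardinality `h!(n-h)`. -/
theorem stmt10 (n h : ℕ) (h1 : 1 ≤ h) (h2 : h + 1 ≤ n)
    (X : Set (Equiv.Perm (Fin n)))
    (hX : X = {p : Equiv.Perm (Fin n) | ∀ j : Fin n, h ≤ (j : ℕ) → ((p j : ℕ) = (j : ℕ) - h)}) :
    (∀ p ∈ X, ({q | (@starGraph n ⟨by omega⟩).Adj p q} \ X).ncard = n - h) ∧
    (∀ q ∉ X, (∃ p ∈ X, (@starGraph n ⟨by omega⟩).Adj q p) →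
      ({p ∈ X | (@starGraph n ⟨by omega⟩).Adj q p}).ncard = 1) ∧
    ({q | q ∉ X ∧ ∃ p ∈ X, (@starGraph n ⟨by omega⟩).Adj p q}).ncard = Nat.factorial h * (n - h) := by
  subst hX
  haveI : NeZero n := ⟨by omega⟩
  exact ⟨fun p hp => part1 h1 h2 p hp, fun q hq hex => part2 h1 h2 q hq hex, part3 h1 h2⟩
end

section
/- Every edge set F of the 4-dimensional bubble-sort graph B_4 that disconnects B_4 so that every component of B_4 − F contains a subgraph isomorphic to B_3 has cardinality at least 6. -/
open SimpleGraph

namespace Stmt15Aux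
abbrev V4 := Equiv.Perm (Fin 4)

instance : DecidableRel (bubbleGraph 4).Adj := fun x y =>
  decidable_of_iff (∃ i : Fin 4, ∃ hi : (i : ℕ) + 1 < 4, y = x * Equiv.swap i ⟨(i:ℕ)+1, hi⟩) Iff.rfl

def s0 : V4 := Equiv.swap 0 1
def s1 : V4 := Equiv.swap 1 2
def ww : Fin 6 → V4 := ![1, s0, s0*s1, s0*s1*s0, s0*s1*s0*s1, s0*s1*s0*s1*s0]
def xx (a : Fin 4) (i : Fin 6) : V4 := Equiv.swap 3 a * ww i
def nu (p : V4) : V4 := p * Equiv.swap 2 3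

lemma F1 : ∀ (a : Fin 4) (i : Fin 6), xx a i 3 = a := by decide
lemma F2 : ∀ (a : Fin 4) (i : Fin 6) (b : Fin 4) (j : Fin 6), xx a i = xx b j → a = b ∧ i = j := by decide
lemma F3 : ∀ p : V4, ∃ i : Fin 6, p = xx (p 3) i := by decide
lemma F4 : ∀ (a : Fin 4) (i : Fin 6), (bubbleGraph 4).Adj (xx a i) (xx a (i+1)) := by decide
lemma F5 : ∀ p : V4, (bubbleGraph 4).Adj p (nu p) := by decide
lemma F6 : ∀ p : V4, (nu p) 3 ≠ p 3 := by decide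
lemma F9 : ∀ c d : Fin 4, c ≠ d → 2 ≤ (Finset.univ.filter fun p : V4 => p 3 = c ∧ (nu p) 3 = d).card := by decide
lemma F10 : ∀ N : Finset (Fin 4), N.card ≤ 2 →
    (Finset.univ.filter fun p : V4 => p 3 ∈ N ∧ (nu p) 3 ∈ N).card ≤ 4 := by decide
lemma F11 : ∀ a : Fin 4, (Finset.univ.filter fun p : V4 => p 3 = a).card = 6 := by decide
lemma L6 : ∀ g : Fin 6 → Bool, (∃ i, g i = true) → (∃ i, g i = false) →
    2 ≤ (Finset.univ.filter fun i : Fin 6 => g i ≠ g (i+1)).card := by decide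
lemma L7 : ∀ i j : Fin 6, ¬(i = j + 1 ∧ i + 1 = j) := by decide

def DD (S : Finset V4) : Finset (V4 × V4) :=
  Finset.univ.filter fun p => p.1 ∈ S ∧ p.2 ∉ S ∧ (bubbleGraph 4).Adj p.1 p.2
def Dsame (S : Finset V4) : Finset (V4 × V4) :=
  Finset.univ.filter fun p => (p.1 ∈ S ∧ p.2 ∉ S ∧ (bubbleGraph 4).Adj p.1 p.2) ∧ p.1 3 = p.2 3
def Dcross (S : Finset V4) : Finset (V4 × V4) :=
  Finset.univ.filter fun p => (p.1 ∈ S ∧ p.2 ∉ S ∧ (bubbleGraph 4).Adj p.1 p.2) ∧ ¬ p.1 3 = p.2 3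
def MM (S : Finset V4) : Finset (Fin 4) :=
  Finset.univ.filter fun a => (∃ i, xx a i ∈ S) ∧ (∃ i, xx a i ∉ S)
def PHI (S : Finset V4) : Finset (Fin 4) := Finset.univ.filter fun a => ∀ i, xx a i ∈ S
def EE (S : Finset V4) : Finset (Fin 4) := Finset.univ.filter fun a => ∀ i, xx a i ∉ S
def crossOut (S : Finset V4) : Finset V4 := S.filter fun p => nu p ∉ S

lemma DD_split (S : Finset V4) : (DD S).card = (Dsame S).card + (Dcross S).card := by
  have h := Finset.card_filter_add_card_filter_not (s := DD S)
    (p := fun p : V4 × V4 => p.1 3 = p.2 3)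
  rw [DD, Finset.filter_filter, Finset.filter_filter] at h
  rw [Dsame, Dcross]
  exact h.symm

lemma part_card (S : Finset V4) : (MM S).card + (PHI S).card + (EE S).card = 4 := by
  have h1 : (PHI S).card + (Finset.univ.filter fun a : Fin 4 => ¬ ∀ i, xx a i ∈ S).card = 4 := by
    rw [PHI]
    simpa using Finset.card_filter_add_card_filter_not
      (s := (Finset.univ : Finset (Fin 4))) (fun a => ∀ i, xx a i ∈ S)
  have h2 : ((Finset.univ.filter fun a : Fin 4 => ¬ ∀ i, xx a i ∈ S).filter
        fun a => ∀ i, xx a i ∉ S).card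
      + ((Finset.univ.filter fun a : Fin 4 => ¬ ∀ i, xx a i ∈ S).filter
        fun a => ¬ ∀ i, xx a i ∉ S).card
      = (Finset.univ.filter fun a : Fin 4 => ¬ ∀ i, xx a i ∈ S).card :=
    Finset.card_filter_add_card_filter_not _
  have e1 : ((Finset.univ.filter fun a : Fin 4 => ¬ ∀ i, xx a i ∈ S).filter
      fun a => ∀ i, xx a i ∉ S) = EE S := by
    rw [EE, Finset.filter_filter]
    apply Finset.filter_congr
    intro a _
    constructor
    · rintro ⟨-, h⟩; exact h
    · intro h; exact ⟨fun hall => h 0 (hall 0), h⟩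
  have e2 : ((Finset.univ.filter fun a : Fin 4 => ¬ ∀ i, xx a i ∈ S).filter
      fun a => ¬ ∀ i, xx a i ∉ S) = MM S := by
    rw [MM, Finset.filter_filter]
    apply Finset.filter_congr
    intro a _
    push_neg
    constructor
    · rintro ⟨⟨i, hi⟩, ⟨j, hj⟩⟩; exact ⟨⟨j, hj⟩, ⟨i, hi⟩⟩
    · rintro ⟨⟨j, hj⟩, ⟨i, hi⟩⟩; exact ⟨⟨i, hi⟩, ⟨j, hj⟩⟩
  rw [e1, e2] at h2
  omega

lemma layer_mixed (S : Finset V4) (a : Fin 4) (h1 : ∃ i, xx a i ∈ S) (h2 : ∃ i, xx a i ∉ S) :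
    2 ≤ (Finset.univ.filter fun p : V4 × V4 =>
      (p.1 ∈ S ∧ p.2 ∉ S ∧ (bubbleGraph 4).Adj p.1 p.2) ∧ p.1 3 = a ∧ p.2 3 = a).card := by
  classical
  set g : Fin 6 → Bool := fun i => decide (xx a i ∈ S) with hg
  have hgt : ∃ i, g i = true := h1.imp fun i hi => by simp [hg, hi]
  have hgf : ∃ i, g i = false := h2.imp fun i hi => by simp [hg, hi]
  have hcard := L6 g hgt hgf
  refine le_trans hcard (Finset.card_le_card_of_injOn
    (fun i => if xx a i ∈ S then (xx a i, xx a (i+1)) else (xx a (i+1), xx a i)) ?_ ?_)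
  · intro i hi
    simp only [Finset.mem_coe, Finset.mem_filter, Finset.mem_univ, true_and] at hi ⊢
    by_cases hmem : xx a i ∈ S
    · have hmem' : xx a (i+1) ∉ S := by
        intro hc; apply hi; simp [hg, hmem, hc]
      simp only [if_pos hmem]
      exact ⟨⟨hmem, hmem', F4 a i⟩, F1 a i, F1 a (i+1)⟩
    · have hmem' : xx a (i+1) ∈ S := by
        by_contra hc; apply hi; simp [hg, hmem, hc]
      simp only [if_neg hmem]
      exact ⟨⟨hmem', hmem, ((F4 a i).symm)⟩, F1 a (i+1), F1 a i⟩
  · intro i _ j _ hij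
    by_cases hi : xx a i ∈ S <;> by_cases hj : xx a j ∈ S <;>
      simp only [if_pos, if_neg, hi, hj, if_true, if_false, Prod.mk.injEq] at hij
    · exact ((F2 a i a j) hij.1).2
    · exact absurd ⟨((F2 a i a (j+1)) hij.1).2, ((F2 a (i+1) a j) hij.2).2⟩ (L7 i j)
    · exact absurd ⟨((F2 a j a (i+1)) hij.1.symm).2, ((F2 a (j+1) a i) hij.2.symm).2⟩ (L7 j i)
    · have := ((F2 a (i+1) a (j+1)) hij.1).2
      exact add_right_cancel this

lemma Dsame_bound (S : Finset V4) : 2 * (MM S).card ≤ (Dsame S).card := by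
  classical
  have hsub : (MM S).biUnion (fun a => Finset.univ.filter fun p : V4 × V4 =>
      (p.1 ∈ S ∧ p.2 ∉ S ∧ (bubbleGraph 4).Adj p.1 p.2) ∧ p.1 3 = a ∧ p.2 3 = a) ⊆ Dsame S := by
    intro p hp
    simp only [Finset.mem_biUnion, Finset.mem_filter, Finset.mem_univ, true_and] at hp
    obtain ⟨a, _, hP, h1, h2⟩ := hp
    rw [Dsame]
    simp only [Finset.mem_filter, Finset.mem_univ, true_and]
    exact ⟨hP, h1.trans h2.symm⟩
  calc 2 * (MM S).card = ∑ _a ∈ MM S, 2 := by rw [Finset.sum_const, smul_eq_mul, mul_comm]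
    _ ≤ ∑ a ∈ MM S, (Finset.univ.filter fun p : V4 × V4 =>
        (p.1 ∈ S ∧ p.2 ∉ S ∧ (bubbleGraph 4).Adj p.1 p.2) ∧ p.1 3 = a ∧ p.2 3 = a).card := by
        apply Finset.sum_le_sum
        intro a ha
        rw [MM] at ha
        simp only [Finset.mem_filter, Finset.mem_univ, true_and] at ha
        exact layer_mixed S a ha.1 ha.2
    _ = ((MM S).biUnion (fun a => Finset.univ.filter fun p : V4 × V4 =>
        (p.1 ∈ S ∧ p.2 ∉ S ∧ (bubbleGraph 4).Adj p.1 p.2) ∧ p.1 3 = a ∧ p.2 3 = a)).card := by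
        rw [Finset.card_biUnion]
        intro a _ b _ hab
        apply Finset.disjoint_left.mpr
        intro p hp hq
        simp only [Finset.mem_filter] at hp hq
        exact hab (hp.2.2.1.symm.trans hq.2.2.1)
    _ ≤ (Dsame S).card := Finset.card_le_card hsub


lemma crossOut_bound (S : Finset V4) : (crossOut S).card ≤ (Dcross S).card := by
  apply Finset.card_le_card_of_injOn (fun p => (p, nu p))
  · intro p hp
    rw [crossOut] at hp
    simp only [Finset.mem_coe, Finset.mem_filter] at hp
    rw [Dcross]
    simp only [Finset.mem_coe, Finset.mem_filter, Finset.mem_univ, true_and]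
    exact ⟨⟨hp.1, hp.2, F5 p⟩, fun h => F6 p h.symm⟩
  · intro p _ q _ h
    exact (Prod.mk.injEq _ _ _ _ ▸ h).1

lemma crossOut_compl_bound (S : Finset V4) : (crossOut Sᶜ).card ≤ (Dcross S).card := by
  apply Finset.card_le_card_of_injOn (fun q => (nu q, q))
  · intro q hq
    rw [crossOut] at hq
    simp only [Finset.mem_coe, Finset.mem_filter, Finset.mem_compl] at hq
    rw [Dcross]
    simp only [Finset.mem_coe, Finset.mem_filter, Finset.mem_univ, true_and]
    refine ⟨⟨by simpa using hq.2, hq.1, (F5 q).symm⟩, F6 q⟩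
  · intro p _ q _ h
    exact (Prod.mk.injEq _ _ _ _ ▸ h).2

lemma mem_layer_not_empty (S : Finset V4) (p : V4) (hp : p ∈ S) : p 3 ∉ EE S := by
  intro he
  rw [EE] at he
  simp only [Finset.mem_filter, Finset.mem_univ, true_and] at he
  obtain ⟨i, hi⟩ := F3 p
  exact he i (hi ▸ hp)

lemma mem_layer_not_full (S : Finset V4) (p : V4) (hp : p ∉ S) : p 3 ∉ PHI S := by
  intro he
  rw [PHI] at he
  simp only [Finset.mem_filter, Finset.mem_univ, true_and] at he
  obtain ⟨i, hi⟩ := F3 p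
  exact hp (hi ▸ he i)

lemma trichotomy (S : Finset V4) (a : Fin 4) : a ∈ MM S ∨ a ∈ PHI S ∨ a ∈ EE S := by
  rw [MM, PHI, EE]
  simp only [Finset.mem_filter, Finset.mem_univ, true_and]
  by_cases h1 : ∀ i, xx a i ∈ S
  · exact Or.inr (Or.inl h1)
  · by_cases h2 : ∀ i, xx a i ∉ S
    · exact Or.inr (Or.inr h2)
    · push_neg at h1 h2
      exact Or.inl ⟨h2, h1⟩

lemma FE_bound (S : Finset V4) : 2 * ((PHI S).card * (EE S).card) ≤ (crossOut S).card := by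
  classical
  have hsub : ((PHI S) ×ˢ (EE S)).biUnion (fun cd =>
      Finset.univ.filter fun p : V4 => p 3 = cd.1 ∧ (nu p) 3 = cd.2) ⊆ crossOut S := by
    intro p hp
    simp only [Finset.mem_biUnion, Finset.mem_product, Finset.mem_filter, Finset.mem_univ,
      true_and] at hp
    obtain ⟨⟨c, d⟩, ⟨hc, hd⟩, h1, h2⟩ := hp
    rw [PHI] at hc; rw [EE] at hd
    simp only [Finset.mem_filter, Finset.mem_univ, true_and] at hc hd
    rw [crossOut]
    simp only [Finset.mem_filter]
    constructor
    · obtain ⟨i, hi⟩ := F3 p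
      rw [hi, h1]; exact hc i
    · obtain ⟨i, hi⟩ := F3 (nu p)
      rw [hi, h2]; exact hd i
  calc 2 * ((PHI S).card * (EE S).card) = ∑ _cd ∈ (PHI S) ×ˢ (EE S), 2 := by
        rw [Finset.sum_const, smul_eq_mul, Finset.card_product, mul_comm]
    _ ≤ ∑ cd ∈ (PHI S) ×ˢ (EE S), (Finset.univ.filter fun p : V4 =>
        p 3 = cd.1 ∧ (nu p) 3 = cd.2).card := by
        apply Finset.sum_le_sum
        intro cd hcd
        simp only [Finset.mem_product] at hcd
        refine F9 cd.1 cd.2 ?_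
        intro heq
        have hc := hcd.1; have hd := hcd.2
        rw [PHI] at hc; rw [EE] at hd
        simp only [Finset.mem_filter, Finset.mem_univ, true_and] at hc hd
        exact hd 0 (heq ▸ hc 0)
    _ = (((PHI S) ×ˢ (EE S)).biUnion (fun cd =>
        Finset.univ.filter fun p : V4 => p 3 = cd.1 ∧ (nu p) 3 = cd.2)).card := by
        rw [Finset.card_biUnion]
        intro cd _ ef _ hne
        apply Finset.disjoint_left.mpr
        intro p hp hq
        simp only [Finset.mem_filter] at hp hq
        exact hne (Prod.ext (hp.2.1.symm.trans hq.2.1) (hp.2.2.symm.trans hq.2.2))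
    _ ≤ (crossOut S).card := Finset.card_le_card hsub


lemma special (S : Finset V4) (hphi : PHI S = ∅) (hm : (MM S).card ≤ 2) (h6 : 6 ≤ S.card) :
    2 ≤ (crossOut S).card := by
  classical
  have hsub : (S.filter fun p => nu p ∈ S) ⊆
      Finset.univ.filter fun p : V4 => p 3 ∈ MM S ∧ (nu p) 3 ∈ MM S := by
    intro p hp
    simp only [Finset.mem_filter] at hp
    simp only [Finset.mem_filter, Finset.mem_univ, true_and]
    constructor
    · rcases trichotomy S (p 3) with h | h | h
      · exact h
      · rw [hphi] at h; exact absurd h (Finset.notMem_empty _)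
      · exact absurd h (mem_layer_not_empty S p hp.1)
    · rcases trichotomy S ((nu p) 3) with h | h | h
      · exact h
      · rw [hphi] at h; exact absurd h (Finset.notMem_empty _)
      · exact absurd h (mem_layer_not_empty S (nu p) hp.2)
  have h4 : (S.filter fun p => nu p ∈ S).card ≤ 4 :=
    le_trans (Finset.card_le_card hsub) (F10 (MM S) hm)
  have hsplit := Finset.card_filter_add_card_filter_not
    (s := S) (p := fun p => nu p ∈ S)
  rw [crossOut]
  omega

lemma hexcl (S : Finset V4) (hphi : PHI S = ∅) (h6 : 6 ≤ S.card) : 2 ≤ (MM S).card := by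
  by_contra hcon
  push_neg at hcon
  have hSne : S.Nonempty := Finset.card_pos.mp (by omega)
  obtain ⟨p, hp⟩ := hSne
  have hpM : p 3 ∈ MM S := by
    rcases trichotomy S (p 3) with h | h | h
    · exact h
    · rw [hphi] at h; exact absurd h (Finset.notMem_empty _)
    · exact absurd h (mem_layer_not_empty S p hp)
  have hM1 : (MM S).card = 1 := le_antisymm (by omega) (Finset.card_pos.mpr ⟨_, hpM⟩)
  obtain ⟨a, ha⟩ := Finset.card_eq_one.mp hM1
  have hsub : S ⊆ Finset.univ.filter fun q : V4 => q 3 = a := by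
    intro q hq
    simp only [Finset.mem_filter, Finset.mem_univ, true_and]
    have hqM : q 3 ∈ MM S := by
      rcases trichotomy S (q 3) with h | h | h
      · exact h
      · rw [hphi] at h; exact absurd h (Finset.notMem_empty _)
      · exact absurd h (mem_layer_not_empty S q hq)
    rw [ha] at hqM
    exact Finset.mem_singleton.mp hqM
  have hSeq : S = Finset.univ.filter fun q : V4 => q 3 = a := by
    apply Finset.eq_of_subset_of_card_le hsub
    rw [F11 a]; omega
  have haPhi : a ∈ PHI S := by
    rw [PHI]
    simp only [Finset.mem_filter, Finset.mem_univ, true_and]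
    intro i
    rw [hSeq]
    simp only [Finset.mem_filter, Finset.mem_univ, true_and]
    exact F1 a i
  rw [hphi] at haPhi
  exact Finset.notMem_empty _ haPhi

lemma MM_compl (S : Finset V4) : MM Sᶜ = MM S := by
  ext a
  rw [MM, MM]
  simp only [Finset.mem_filter, Finset.mem_univ, true_and, Finset.mem_compl]
  tauto

lemma PHI_compl (S : Finset V4) : PHI Sᶜ = EE S := by
  ext a
  rw [PHI, EE]
  simp only [Finset.mem_filter, Finset.mem_univ, true_and, Finset.mem_compl]

lemma key (S : Finset V4) (h1 : 6 ≤ S.card) (h2 : 6 ≤ Sᶜ.card) : 6 ≤ (DD S).card := by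
  rw [DD_split]
  have hpart := part_card S
  have hDs := Dsame_bound S
  have hc1 := crossOut_bound S
  have hc2 := crossOut_compl_bound S
  have hFE := FE_bound S
  by_cases hphi : PHI S = ∅
  · have hm2 := hexcl S hphi h1
    rcases le_or_gt 3 (MM S).card with h3 | h3
    · omega
    · have hsp := special S hphi (by omega) h1
      omega
  · by_cases hee : EE S = ∅
    · have hphiS : PHI Sᶜ = ∅ := by rw [PHI_compl]; exact hee
      have hm2 := hexcl Sᶜ hphiS h2
      rw [MM_compl] at hm2
      rcases le_or_gt 3 (MM S).card with h3 | h3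
      · omega
      · have hsp := special Sᶜ hphiS (by rw [MM_compl]; omega) h2
        omega
    · have hf1 : 1 ≤ (PHI S).card :=
        Finset.card_pos.mpr (Finset.nonempty_iff_ne_empty.mpr hphi)
      have he1 : 1 ≤ (EE S).card :=
        Finset.card_pos.mpr (Finset.nonempty_iff_ne_empty.mpr hee)
      have hf3 : (PHI S).card = 1 ∨ (PHI S).card = 2 ∨ (PHI S).card = 3 := by omega
      have he3 : (EE S).card = 1 ∨ (EE S).card = 2 ∨ (EE S).card = 3 := by omega
      rcases hf3 with hf | hf | hf <;> rcases he3 with he | he | he <;>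
        rw [hf, he] at hFE <;> omega


end Stmt15Aux

open Stmt15Aux

/-- Every `B₃`-edge-cut of `B₄` (an edge set `F` such that `B₄ - F` is disconnected
and every component of `B₄ - F` contains a subgraph isomorphic to `B₃`) has at least 6 edges. -/
theorem stmt15 (F : Set (Sym2 (Equiv.Perm (Fin 4))))
    (hF : F ⊆ (bubbleGraph 4).edgeSet)
    (hdisc : ¬ ((bubbleGraph 4).deleteEdges F).Connected)
    (hcomp : ∀ v : Equiv.Perm (Fin 4), ∃ A : Set (Equiv.Perm (Fin 4)),
      v ∈ A ∧ (∀ a ∈ A, ((bubbleGraph 4).deleteEdges F).Reachable v a) ∧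
      Nonempty (bubbleGraph 3 ≃g ((bubbleGraph 4).deleteEdges F).induce A)) :
    6 ≤ F.ncard := by

  classical
  have hpre : ¬ ((bubbleGraph 4).deleteEdges F).Preconnected := by
    intro h
    exact hdisc (SimpleGraph.connected_iff _ |>.mpr ⟨h, ⟨1⟩⟩)
  rw [SimpleGraph.Preconnected] at hpre
  push_neg at hpre
  obtain ⟨u, w, huw⟩ := hpre
  set G' := (bubbleGraph 4).deleteEdges F with hG'
  set S : Finset V4 := Finset.univ.filter (fun p => G'.Reachable u p) with hS
  have hmemS : ∀ p : V4, p ∈ S ↔ G'.Reachable u p := by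
    intro p
    rw [hS, Finset.mem_filter]
    simp
  -- cardinality of a B3 copy
  have hAcard : ∀ A : Set V4, Nonempty (bubbleGraph 3 ≃g G'.induce A) → A.ncard = 6 := by
    rintro A ⟨e⟩
    rw [← Nat.card_coe_set_eq, ← Nat.card_congr e.toEquiv, Nat.card_eq_fintype_card]
    decide
  have hScard : 6 ≤ S.card := by
    obtain ⟨A, huA, hreach, hiso⟩ := hcomp u
    have hsub : A ⊆ (S : Set V4) := by
      intro a ha
      simp only [Finset.coe_filter, Set.mem_setOf_eq, hS]
      simpa using hreach a ha
    calc 6 = A.ncard := (hAcard A hiso).symm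
      _ ≤ (S : Set V4).ncard := Set.ncard_le_ncard hsub (Set.toFinite _)
      _ = S.card := Set.ncard_coe_finset S
  have hSccard : 6 ≤ Sᶜ.card := by
    obtain ⟨A, hwA, hreach, hiso⟩ := hcomp w
    have hsub : A ⊆ (Sᶜ : Finset V4) := by
      intro a ha
      simp only [Finset.coe_compl, Set.mem_compl_iff, Finset.mem_coe]
      intro haS
      exact huw (((hmemS a).mp haS).trans (hreach a ha).symm)
    calc 6 = A.ncard := (hAcard A hiso).symm
      _ ≤ ((Sᶜ : Finset V4) : Set V4).ncard := Set.ncard_le_ncard hsub (Set.toFinite _)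
      _ = (Sᶜ).card := Set.ncard_coe_finset _
  have hkey := Stmt15Aux.key S hScard hSccard
  have hFfin : F.Finite := Set.toFinite F
  rw [Set.ncard_eq_toFinset_card F hFfin]
  refine le_trans hkey (Finset.card_le_card_of_injOn (fun p => s(p.1, p.2)) ?_ ?_)
  · intro p hp
    rw [DD] at hp
    simp only [Finset.mem_coe, Finset.mem_filter, Finset.mem_univ, true_and] at hp
    obtain ⟨h1, h2, hadj⟩ := hp
    rw [Finset.mem_coe, Set.Finite.mem_toFinset]
    by_contra hne
    have hadj' : G'.Adj p.1 p.2 := by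
      rw [hG', SimpleGraph.deleteEdges_adj]
      exact ⟨hadj, hne⟩
    exact h2 ((hmemS p.2).mpr (((hmemS p.1).mp h1).trans hadj'.reachable))
  · intro p hp q hq hpq
    rw [DD] at hp hq
    simp only [Finset.coe_filter, Set.mem_setOf_eq, Finset.mem_univ, true_and] at hp hq
    rcases Sym2.eq_iff.mp hpq with ⟨h1, h2⟩ | ⟨h1, h2⟩
    · exact Prod.ext h1 h2
    · exact absurd (h1 ▸ hp.1) hq.2.1
end

section
/- For a fixed position t ∈ {1, n}, the bubble-sort graph B_n is partitioned into n induced subgraphs B_n^{t:j}, j ∈ {1,…,n}, each isomorphic to B_{n−1}, and between any two distinct such subgraphs B_n^{t:j_1} and B_n^{t:j_2} there are exactly (n−2)! pairwise vertex-disjoint (independent) edges. -/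
open SimpleGraph

open Equiv in
lemma optionCongr_removeNone' {α β : Type*} (q : Option α ≃ Option β) (h : q none = none) :
    Equiv.optionCongr (Equiv.removeNone q) = q := by
  refine Equiv.ext fun o => ?_
  cases o with
  | none => simpa using h.symm
  | some a =>
    have hex : ∃ x', q (some a) = some x' := by
      cases hq : q (some a) with
      | none => exact absurd (q.injective (hq.trans h.symm)) (by simp)
      | some b => exact ⟨b, rfl⟩
    show Equiv.optionCongr (Equiv.removeNone q) (some a) = q (some a)
    rw [Equiv.optionCongr_apply, Option.map_some]
    exact Equiv.removeNone_some q hex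

lemma bubbleIsoLayer {n m : ℕ} (t j : Fin n) (P : Fin n ≃ Option (Fin m))
    (hPt : P t = none)
    (hfwd : ∀ (i : Fin n) (hi : (i : ℕ) + 1 < n), i ≠ t → (⟨(i : ℕ) + 1, hi⟩ : Fin n) ≠ t →
      ∃ (k : Fin m) (hk : (k : ℕ) + 1 < m),
        P i = some k ∧ P ⟨(i : ℕ) + 1, hi⟩ = some ⟨(k : ℕ) + 1, hk⟩)
    (hbwd : ∀ (k : Fin m) (hk : (k : ℕ) + 1 < m), ∃ (i : Fin n) (hi : (i : ℕ) + 1 < n),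
      P i = some k ∧ P ⟨(i : ℕ) + 1, hi⟩ = some ⟨(k : ℕ) + 1, hk⟩) :
    Nonempty ((bubbleGraph n).induce {p : Equiv.Perm (Fin n) | p t = j} ≃g bubbleGraph m) := by
  classical
  set V : Fin n ≃ Option (Fin m) := (Equiv.swap t j).trans P with hV
  have hVj : V j = none := by simp [hV, hPt]
  have hVsymm : V.symm none = j := by rw [Equiv.symm_apply_eq]; exact hVj.symm
  have hPsymm : P.symm none = t := by rw [Equiv.symm_apply_eq]; exact hPt.symm
  set F : Equiv.Perm (Fin m) → Equiv.Perm (Fin n) :=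
    fun e => P.trans ((Equiv.optionCongr e).trans V.symm) with hF
  have hFmem : ∀ e, F e t = j := by
    intro e; simp [hF, hPt, hVsymm]
  have hFval : ∀ e x, F e x = V.symm (Equiv.optionCongr e (P x)) := fun _ _ => rfl
  let g : Equiv.Perm (Fin m) ≃ {p : Equiv.Perm (Fin n) // p t = j} :=
  { toFun := fun e => ⟨F e, hFmem e⟩
    invFun := fun p => Equiv.removeNone ((P.symm.trans p.1).trans V)
    left_inv := by
      intro e
      show Equiv.removeNone ((P.symm.trans (F e)).trans V) = e
      have h1 : (P.symm.trans (F e)).trans V = Equiv.optionCongr e := by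
        refine Equiv.ext fun o => ?_
        simp [hF, hV]
      rw [h1, Equiv.removeNone_optionCongr]
    right_inv := by
      rintro ⟨p, hp⟩
      have h0 : ((P.symm.trans p).trans V) none = none := by
        simp [Equiv.trans_apply, hPsymm, hp, hVj]
      apply Subtype.ext
      show F (Equiv.removeNone ((P.symm.trans p).trans V)) = p
      rw [hF]
      simp only []
      rw [optionCongr_removeNone' _ h0]
      refine Equiv.ext fun x => ?_
      simp [Equiv.trans_apply] }
  have hg : ∀ e, (g e : Equiv.Perm (Fin n)) = F e := fun _ => rfl
  refine ⟨(SimpleGraph.Iso.symm ⟨g, ?_⟩ : _ ≃g _)⟩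
  intro e₁ e₂
  show (bubbleGraph n).Adj (F e₁) (F e₂) ↔ (bubbleGraph m).Adj e₁ e₂
  constructor
  · rintro ⟨i, hi, heq⟩
    have hii' : i ≠ (⟨(i : ℕ) + 1, hi⟩ : Fin n) := by
      intro h; have := congrArg Fin.val h; simp at this
    have hswapt : Equiv.swap i (⟨(i : ℕ) + 1, hi⟩ : Fin n) t = t := by
      apply (F e₁).injective
      have h1 : F e₁ (Equiv.swap i (⟨(i : ℕ) + 1, hi⟩ : Fin n) t) = F e₂ t := by
        rw [heq]; rfl
      rw [h1, hFmem, hFmem]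
    have hti : i ≠ t := by
      intro h; subst h
      rw [Equiv.swap_apply_left] at hswapt
      exact hii' hswapt.symm
    have hti' : (⟨(i : ℕ) + 1, hi⟩ : Fin n) ≠ t := by
      intro h; rw [← h, Equiv.swap_apply_right] at hswapt
      exact hii' hswapt
    obtain ⟨k, hk, hPi, hPi'⟩ := hfwd i hi hti hti'
    refine ⟨k, hk, ?_⟩
    apply Equiv.optionCongr_injective
    refine Equiv.ext fun o => ?_
    have h1 : Equiv.swap i (⟨(i : ℕ) + 1, hi⟩ : Fin n) (P.symm o) =
        P.symm (Equiv.swap (some k) (some ⟨(k : ℕ) + 1, hk⟩) o) := by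
      apply P.injective
      rw [Equiv.apply_symm_apply, ← P.injective.swap_apply, Equiv.apply_symm_apply, hPi, hPi']
    calc Equiv.optionCongr e₂ o = V (F e₂ (P.symm o)) := by
          rw [hFval]; simp
      _ = V (F e₁ (Equiv.swap i (⟨(i : ℕ) + 1, hi⟩ : Fin n) (P.symm o))) := by rw [heq]; rfl
      _ = V (F e₁ (P.symm (Equiv.swap (some k) (some ⟨(k : ℕ) + 1, hk⟩) o))) := by rw [h1]
      _ = Equiv.optionCongr e₁ (Equiv.swap (some k) (some ⟨(k : ℕ) + 1, hk⟩) o) := by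
          rw [hFval]; simp
      _ = Equiv.optionCongr (e₁ * Equiv.swap k ⟨(k : ℕ) + 1, hk⟩) o := by
          rw [show e₁ * Equiv.swap k ⟨(k : ℕ) + 1, hk⟩
                = (Equiv.swap k ⟨(k : ℕ) + 1, hk⟩).trans e₁ from rfl,
              Equiv.optionCongr_trans, Equiv.trans_apply, Equiv.optionCongr_swap]
  · rintro ⟨k, hk, heq⟩
    obtain ⟨i, hi, hPi, hPi'⟩ := hbwd k hk
    refine ⟨i, hi, ?_⟩
    refine Equiv.ext fun x => ?_
    show F e₂ x = F e₁ (Equiv.swap i ⟨(i : ℕ) + 1, hi⟩ x)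
    rw [hFval, hFval]
    congr 1
    have h2 : P (Equiv.swap i (⟨(i : ℕ) + 1, hi⟩ : Fin n) x) =
        Equiv.swap (some k) (some ⟨(k : ℕ) + 1, hk⟩) (P x) := by
      rw [← hPi, ← hPi', P.injective.swap_apply]
    rw [h2, heq,
        show e₁ * Equiv.swap k ⟨(k : ℕ) + 1, hk⟩
              = (Equiv.swap k ⟨(k : ℕ) + 1, hk⟩).trans e₁ from rfl,
        Equiv.optionCongr_trans, Equiv.trans_apply, Equiv.optionCongr_swap]

lemma bubbleIso_first {m : ℕ} (t j : Fin (m + 2)) (ht : (t : ℕ) = 0) :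
    Nonempty ((bubbleGraph (m + 2)).induce {p : Equiv.Perm (Fin (m + 2)) | p t = j} ≃g
      bubbleGraph (m + 1)) := by
  apply bubbleIsoLayer t j (finSuccEquiv (m + 1))
  · have h : t = 0 := Fin.ext (by simpa using ht)
    rw [h]; exact finSuccEquiv_zero
  · intro i hi hit hit'
    have hine : (i : ℕ) ≠ 0 := fun h => hit (Fin.ext (by rw [h, ht]))
    obtain ⟨c, hc⟩ := Nat.exists_eq_succ_of_ne_zero hine
    have hc1 : c + 1 < m + 1 := by omega
    refine ⟨⟨c, by omega⟩, hc1, ?_, ?_⟩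
    · have h : i = Fin.succ ⟨c, by omega⟩ := Fin.ext (by simp [hc])
      conv_lhs => rw [h]
      exact finSuccEquiv_succ _
    · have h : (⟨(i : ℕ) + 1, hi⟩ : Fin (m + 2)) = Fin.succ ⟨c + 1, hc1⟩ :=
        Fin.ext (by simp [hc])
      conv_lhs => rw [h]
      exact finSuccEquiv_succ _
  · intro k hk
    refine ⟨Fin.succ k, by show (k : ℕ) + 1 + 1 < m + 2; omega, ?_, ?_⟩
    · rw [finSuccEquiv_succ]
    · have h : (⟨((Fin.succ k : Fin (m + 2)) : ℕ) + 1,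
            by show (k : ℕ) + 1 + 1 < m + 2; omega⟩ : Fin (m + 2)) =
          Fin.succ ⟨(k : ℕ) + 1, hk⟩ := Fin.ext (by simp)
      conv_lhs => rw [h]
      exact finSuccEquiv_succ _

lemma bubbleIso_last {m : ℕ} (t j : Fin (m + 2)) (ht : (t : ℕ) = m + 1) :
    Nonempty ((bubbleGraph (m + 2)).induce {p : Equiv.Perm (Fin (m + 2)) | p t = j} ≃g
      bubbleGraph (m + 1)) := by
  apply bubbleIsoLayer t j finSuccEquivLast
  · have h : t = Fin.last (m + 1) := Fin.ext (by simpa using ht)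
    rw [h]; exact finSuccEquivLast_last
  · intro i hi hit hit'
    have h2 : (i : ℕ) + 1 < m + 1 := by
      rcases Nat.lt_or_ge ((i : ℕ) + 1) (m + 1) with h | h
      · exact h
      · exfalso; apply hit'; apply Fin.ext; simp only [ht]; omega
    refine ⟨⟨(i : ℕ), by omega⟩, h2, ?_, ?_⟩
    · have h : i = Fin.castSucc ⟨(i : ℕ), by omega⟩ := Fin.ext (by simp)
      conv_lhs => rw [h]
      exact finSuccEquivLast_castSucc _
    · have h : (⟨(i : ℕ) + 1, hi⟩ : Fin (m + 2)) = Fin.castSucc ⟨(i : ℕ) + 1, h2⟩ :=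
        Fin.ext (by simp)
      conv_lhs => rw [h]
      exact finSuccEquivLast_castSucc _
  · intro k hk
    refine ⟨⟨(k : ℕ), by omega⟩, by show (k : ℕ) + 1 < m + 2; omega, ?_, ?_⟩
    · have h : (⟨(k : ℕ), by omega⟩ : Fin (m + 2)) = Fin.castSucc ⟨(k : ℕ), by omega⟩ :=
        Fin.ext (by simp)
      conv_lhs => rw [h]
      exact finSuccEquivLast_castSucc _
    · have h : (⟨((⟨(k : ℕ), by omega⟩ : Fin (m + 2)) : ℕ) + 1,
            by show (k : ℕ) + 1 < m + 2; omega⟩ : Fin (m + 2)) =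
          Fin.castSucc ⟨(k : ℕ) + 1, hk⟩ := Fin.ext (by simp)
      conv_lhs => rw [h]
      exact finSuccEquivLast_castSucc _

lemma card_fix_two {n : ℕ} (hn : 2 ≤ n) (a b : Fin n) (hab : a ≠ b) (u v : Fin n) (huv : u ≠ v) :
    Nat.card {x : Equiv.Perm (Fin n) // x a = u ∧ x b = v} = Nat.factorial (n - 2) := by
  classical
  set σ : Equiv.Perm (Fin n) := Equiv.swap (Equiv.swap a u b) v * Equiv.swap a u with hσ
  have h1 : Equiv.swap a u b ≠ u := by
    intro h
    exact hab ((Equiv.swap a u).injective (by rw [h, Equiv.swap_apply_left])).symm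
  have hσa : σ a = u := by
    rw [hσ, Equiv.Perm.mul_apply, Equiv.swap_apply_left]
    exact Equiv.swap_apply_of_ne_of_ne (Ne.symm h1) huv
  have hσb : σ b = v := by
    rw [hσ, Equiv.Perm.mul_apply, Equiv.swap_apply_left]
  have e1 : {x : Equiv.Perm (Fin n) // x a = u ∧ x b = v} ≃
      {y : Equiv.Perm (Fin n) // y a = a ∧ y b = b} :=
  { toFun := fun x => ⟨σ⁻¹ * x.1, by
      constructor
      · rw [Equiv.Perm.mul_apply, x.2.1, ← hσa]; exact σ.symm_apply_apply a
      · rw [Equiv.Perm.mul_apply, x.2.2, ← hσb]; exact σ.symm_apply_apply b⟩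
    invFun := fun y => ⟨σ * y.1, by
      constructor
      · rw [Equiv.Perm.mul_apply, y.2.1, hσa]
      · rw [Equiv.Perm.mul_apply, y.2.2, hσb]⟩
    left_inv := fun x => Subtype.ext (by simp)
    right_inv := fun y => Subtype.ext (by simp) }
  have e2 : {y : Equiv.Perm (Fin n) // y a = a ∧ y b = b} ≃
      Equiv.Perm {c : Fin n // c ≠ a ∧ c ≠ b} := by
    refine Equiv.trans ?_ (Equiv.Perm.subtypeEquivSubtypePerm (fun c => c ≠ a ∧ c ≠ b)).symm
    apply Equiv.subtypeEquivRight
    intro f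
    constructor
    · rintro ⟨ha, hb⟩ c hc
      rcases not_and_or.mp hc with h | h
      · rw [not_ne_iff.mp h, ha]
      · rw [not_ne_iff.mp h, hb]
    · intro h
      exact ⟨h a (by simp), h b (by simp)⟩
  rw [Nat.card_congr (e1.trans e2), Nat.card_eq_fintype_card, Fintype.card_perm]
  congr 1
  rw [Fintype.card_subtype]
  have h : Finset.filter (fun c : Fin n => c ≠ a ∧ c ≠ b) Finset.univ =
      Finset.univ \ {a, b} := by
    ext c; simp [not_or, and_comm]
  rw [h, Finset.card_sdiff_of_subset (Finset.subset_univ _), Finset.card_univ, Fintype.card_fin,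
      Finset.card_pair hab]

lemma crossPart {n : ℕ} (hn : 2 ≤ n) (t t' : Fin n) (htt' : t ≠ t')
    (i₀ : Fin n) (hi₀ : (i₀ : ℕ) + 1 < n)
    (hτt : Equiv.swap i₀ ⟨(i₀ : ℕ) + 1, hi₀⟩ t = t')
    (hcross : ∀ x y : Equiv.Perm (Fin n), (bubbleGraph n).Adj x y → x t ≠ y t →
      y = x * Equiv.swap i₀ ⟨(i₀ : ℕ) + 1, hi₀⟩)
    (j₁ j₂ : Fin n) (hj : j₁ ≠ j₂) :
    Nat.card {e : Equiv.Perm (Fin n) × Equiv.Perm (Fin n) //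
        e.1 t = j₁ ∧ e.2 t = j₂ ∧ (bubbleGraph n).Adj e.1 e.2} = Nat.factorial (n - 2) ∧
    (∀ x x' y y' : Equiv.Perm (Fin n), x t = j₁ → x' t = j₁ → y t = j₂ → y' t = j₂ →
      (bubbleGraph n).Adj x y → (bubbleGraph n).Adj x' y' → (x = x' ↔ y = y')) := by
  set τ := Equiv.swap i₀ ⟨(i₀ : ℕ) + 1, hi₀⟩ with hτ
  have key : ∀ (x y : Equiv.Perm (Fin n)), x t = j₁ → y t = j₂ →
      (bubbleGraph n).Adj x y → y = x * τ := by
    intro x y hx hy hadj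
    exact hcross x y hadj (by rw [hx, hy]; exact hj)
  constructor
  · have E : {e : Equiv.Perm (Fin n) × Equiv.Perm (Fin n) //
        e.1 t = j₁ ∧ e.2 t = j₂ ∧ (bubbleGraph n).Adj e.1 e.2} ≃
        {x : Equiv.Perm (Fin n) // x t = j₁ ∧ x t' = j₂} :=
    { toFun := fun e => ⟨e.1.1, e.2.1, by
        rw [← hτt]
        have hk := key e.1.1 e.1.2 e.2.1 e.2.2.1 e.2.2.2
        calc e.1.1 (τ t) = (e.1.1 * τ) t := rfl
          _ = e.1.2 t := by rw [← hk]
          _ = j₂ := e.2.2.1⟩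
      invFun := fun x => ⟨(x.1, x.1 * τ), x.2.1, by
        show (x.1 * τ) t = j₂
        rw [Equiv.Perm.mul_apply, hτt, x.2.2], ⟨i₀, hi₀, rfl⟩⟩
      left_inv := fun e => by
        apply Subtype.ext
        show (e.1.1, e.1.1 * τ) = e.1
        rw [← key e.1.1 e.1.2 e.2.1 e.2.2.1 e.2.2.2]
      right_inv := fun x => rfl }
    rw [Nat.card_congr E]
    exact card_fix_two hn t t' htt' j₁ j₂ hj
  · intro x x' y y' hx hx' hy hy' hadj hadj'
    rw [key x y hx hy hadj, key x' y' hx' hy' hadj']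
    exact (mul_left_inj τ).symm


/-- For a fixed position `t` being the first or last coordinate, `B_n` is
partitioned into the `n` induced subgraphs `B_n^{t:j}`, each isomorphic to `B_{n-1}`, and
between any two distinct such subgraphs there are exactly `(n-2)!` pairwise vertex-disjoint
(independent) edges. -/
theorem stmt17 (n : ℕ) (hn : 2 ≤ n) (t : Fin n) (ht : (t : ℕ) = 0 ∨ (t : ℕ) = n - 1) :
    (∀ j : Fin n,
      Nonempty ((bubbleGraph n).induce {p : Equiv.Perm (Fin n) | p t = j} ≃g
        bubbleGraph (n - 1))) ∧
    (∀ j₁ j₂ : Fin n, j₁ ≠ j₂ →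
      Nat.card {e : Equiv.Perm (Fin n) × Equiv.Perm (Fin n) //
          e.1 t = j₁ ∧ e.2 t = j₂ ∧ (bubbleGraph n).Adj e.1 e.2} = Nat.factorial (n - 2) ∧
      (∀ x x' y y' : Equiv.Perm (Fin n), x t = j₁ → x' t = j₁ → y t = j₂ → y' t = j₂ →
        (bubbleGraph n).Adj x y → (bubbleGraph n).Adj x' y' → (x = x' ↔ y = y'))) := by
  obtain ⟨m, rfl⟩ : ∃ m, n = m + 2 := ⟨n - 2, by omega⟩
  constructor
  · intro j
    rcases ht with h0 | hl
    · exact bubbleIso_first t j h0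
    · exact bubbleIso_last t j (by omega)
  · intro j₁ j₂ hj
    rcases ht with h0 | hl
    · -- first coordinate
      have ht0 : t = ⟨0, by omega⟩ := Fin.ext h0
      have hi₀ : ((⟨0, by omega⟩ : Fin (m + 2)) : ℕ) + 1 < m + 2 := by
        show (0 : ℕ) + 1 < m + 2; omega
      refine crossPart (by omega) t ⟨1, by omega⟩ ?_ ⟨0, by omega⟩ hi₀ ?_ ?_ j₁ j₂ hj
      · intro h
        have h2 : (t : ℕ) = 1 := congrArg Fin.val h
        omega
      · rw [ht0]
        exact Equiv.swap_apply_left _ _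
      · rintro x y ⟨i, hi, rfl⟩ hne
        have hiv : (i : ℕ) = 0 := by
          by_contra hne0
          apply hne
          show x t = x (Equiv.swap i ⟨(i : ℕ) + 1, hi⟩ t)
          congr 1
          have ha : t ≠ i := fun h => hne0 (by have := congrArg Fin.val h; omega)
          have hb : t ≠ (⟨(i : ℕ) + 1, hi⟩ : Fin (m + 2)) := fun h => by
            have h2 : (t : ℕ) = (i : ℕ) + 1 := congrArg Fin.val h
            omega
          rw [Equiv.swap_apply_of_ne_of_ne ha hb]
        have h1 : Equiv.swap i (⟨(i : ℕ) + 1, hi⟩ : Fin (m + 2)) =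
            Equiv.swap (⟨0, by omega⟩ : Fin (m + 2))
              ⟨((⟨0, by omega⟩ : Fin (m + 2)) : ℕ) + 1, hi₀⟩ := by
          congr 1
          · exact Fin.ext hiv
          · exact Fin.ext (show (i : ℕ) + 1 = 0 + 1 by omega)
        rw [h1]
    · -- last coordinate
      have ht1 : t = ⟨m + 1, by omega⟩ := Fin.ext (show (t : ℕ) = m + 1 by omega)
      have hi₀ : ((⟨m, by omega⟩ : Fin (m + 2)) : ℕ) + 1 < m + 2 := by
        show m + 1 < m + 2; omega
      refine crossPart (by omega) t ⟨m, by omega⟩ ?_ ⟨m, by omega⟩ hi₀ ?_ ?_ j₁ j₂ hj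
      · intro h
        have h2 : (t : ℕ) = m := congrArg Fin.val h
        omega
      · rw [ht1]
        exact Equiv.swap_apply_right _ _
      · rintro x y ⟨i, hi, rfl⟩ hne
        have hiv : (i : ℕ) = m := by
          by_contra hne0
          apply hne
          show x t = x (Equiv.swap i ⟨(i : ℕ) + 1, hi⟩ t)
          congr 1
          have ha : t ≠ i := fun h => by
            have h2 : (t : ℕ) = (i : ℕ) := congrArg Fin.val h
            omega
          have hb : t ≠ (⟨(i : ℕ) + 1, hi⟩ : Fin (m + 2)) := fun h => by
            have h2 : (t : ℕ) = (i : ℕ) + 1 := congrArg Fin.val h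
            omega
          rw [Equiv.swap_apply_of_ne_of_ne ha hb]
        have h1 : Equiv.swap i (⟨(i : ℕ) + 1, hi⟩ : Fin (m + 2)) =
            Equiv.swap (⟨m, by omega⟩ : Fin (m + 2))
              ⟨((⟨m, by omega⟩ : Fin (m + 2)) : ℕ) + 1, hi₀⟩ := by
          congr 1
          · exact Fin.ext hiv
          · exact Fin.ext (show (i : ℕ) + 1 = m + 1 by omega)
        rw [h1]
end
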